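/- arXiv:2310.02891 — 3 statements merged into one kernel-verified Lean document; each statement's English description precedes it below -/
import Mathlib

section
/- Let σ ∈ (0,1) and let θ ∈ (0,1] be the exponent of the Hölder continuity estimate for h. For every ξ > 0 there exist constants C(ξ) > 0 and t₀(ξ) > 0 such that for all t ≥ t₀(ξ) and all x, y, x₀ ∈ M with d(x₀,y) < ξ: |Q_t^σ(x,y) − Q_t^σ(x,x₀)| ≤ C(ξ) t^{−θ} Q_t^σ(x,x₀). -/
open MeasureTheory Metric Real Filter

section AuxLemmas

lemma aux_contOn (B s : ℝ) : ContinuousOn (fun u : ℝ => Real.exp (-B/u) * u^s) (Set.Ioi 0) := by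
  apply ContinuousOn.mul
  · exact (Real.continuous_exp.comp_continuousOn
      (continuousOn_const.div continuousOn_id (fun x hx => ne_of_gt hx)))
  · exact ContinuousOn.rpow_const continuousOn_id (fun x hx => Or.inl (ne_of_gt hx))

lemma aux_exp_bound {B u : ℝ} (hB : 0 < B) (hu : 0 < u) (n : ℕ) :
    Real.exp (-B/u) ≤ n.factorial * (u/B)^n := by
  have h1 : (B/u)^n / n.factorial ≤ Real.exp (B/u) :=
    Real.pow_div_factorial_le_exp (B/u) (by positivity) n
  have h2 : Real.exp (-B/u) = 1 / Real.exp (B/u) := by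
    rw [neg_div, Real.exp_neg]; ring
  rw [h2]
  have h3 : (0:ℝ) < (B/u)^n / n.factorial := by positivity
  calc 1 / Real.exp (B/u) ≤ 1 / ((B/u)^n / n.factorial) :=
        one_div_le_one_div_of_le h3 h1
    _ = n.factorial / (B/u)^n := by rw [one_div_div]
    _ = n.factorial * ((B/u)⁻¹)^n := by rw [inv_pow, div_eq_mul_inv]
    _ = n.factorial * (u/B)^n := by rw [inv_div]

lemma aux_pow_exp {m s : ℝ} (hm : 0 < m) (hs : 0 ≤ s) (n : ℕ) :
    s^n * Real.exp (-(m*s)) ≤ n.factorial / m^n := by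
  have key : m^n * s^n ≤ n.factorial * Real.exp (m*s) := by
    have h := Real.pow_div_factorial_le_exp (m*s) (by positivity) n
    rw [div_le_iff₀ (by positivity), mul_pow] at h
    linarith
  rw [le_div_iff₀ (by positivity)]
  calc s^n * Real.exp (-(m*s)) * m^n = (m^n * s^n) * Real.exp (-(m*s)) := by ring
    _ ≤ (n.factorial * Real.exp (m*s)) * Real.exp (-(m*s)) :=
        mul_le_mul_of_nonneg_right key (Real.exp_nonneg _)
    _ = n.factorial * (Real.exp (m*s) * Real.exp (-(m*s))) := by ring
    _ = n.factorial := by rw [← Real.exp_add]; simp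

lemma aux_poly (p m : ℝ) (hp : 0 ≤ p) (hm : 0 < m) : ∃ C : ℝ, 0 < C ∧ ∀ s : ℝ, 0 ≤ s →
    (1+s)^p * Real.exp (-(m*s)) ≤ C := by
  set n : ℕ := ⌈p⌉₊ with hn
  refine ⟨2^n * (1 + n.factorial/m^n), by positivity, fun s hs => ?_⟩
  have h1s : (1:ℝ) ≤ 1 + s := by linarith
  have h1 : (1+s)^p ≤ (1+s)^n := by
    rw [← Real.rpow_natCast (1+s) n]
    exact Real.rpow_le_rpow_of_exponent_le h1s (Nat.le_ceil p)
  have h2 : (1+s)^n ≤ 2^n * (1 + s^n) := by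
    calc (1+s)^n ≤ (2 * max 1 s)^n := by
          apply pow_le_pow_left₀ (by linarith)
          rcases le_total s 1 with hs1 | hs1
          · calc 1 + s ≤ 2 := by linarith
              _ ≤ 2 * max 1 s := by nlinarith [le_max_left (1:ℝ) s]
          · calc 1 + s ≤ 2 * s := by linarith
              _ ≤ 2 * max 1 s := by nlinarith [le_max_right (1:ℝ) s]
      _ = 2^n * (max 1 s)^n := mul_pow 2 _ n
      _ ≤ 2^n * (1 + s^n) := by
          apply mul_le_mul_of_nonneg_left _ (by positivity)
          rcases le_total s 1 with hs1 | hs1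
          · rw [max_eq_left hs1]; have : (0:ℝ) ≤ s^n := by positivity
            simp only [one_pow]; linarith
          · rw [max_eq_right hs1]; linarith
  have h3 : s^n * Real.exp (-(m*s)) ≤ n.factorial / m^n := aux_pow_exp hm hs n
  have hexp1 : Real.exp (-(m*s)) ≤ 1 := by
    rw [Real.exp_le_one_iff]; simp; positivity
  calc (1+s)^p * Real.exp (-(m*s)) ≤ (1+s)^n * Real.exp (-(m*s)) :=
        mul_le_mul_of_nonneg_right h1 (Real.exp_nonneg _)
    _ ≤ (2^n * (1 + s^n)) * Real.exp (-(m*s)) :=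
        mul_le_mul_of_nonneg_right h2 (Real.exp_nonneg _)
    _ = 2^n * (Real.exp (-(m*s)) + s^n * Real.exp (-(m*s))) := by ring
    _ ≤ 2^n * (1 + n.factorial/m^n) := by
        apply mul_le_mul_of_nonneg_left _ (by positivity)
        exact add_le_add hexp1 h3

lemma aux_gamma (s : ℝ) (hs : 0 < s) : ∃ C : ℝ, 0 < C ∧ ∀ B : ℝ, 0 < B →
    IntegrableOn (fun u => Real.exp (-B/u) * u^(-1-s)) (Set.Ioi (0:ℝ)) ∧
    (∫ u in Set.Ioi (0:ℝ), Real.exp (-B/u) * u^(-1-s)) ≤ C * B^(-s) := by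
  set n : ℕ := ⌈s⌉₊ + 1 with hn
  have hns : s + 1 ≤ (n:ℝ) := by
    have := Nat.le_ceil s
    push_cast [hn]; linarith
  have hn1 : (1:ℝ) ≤ (n:ℝ) - s := by linarith
  refine ⟨(n.factorial : ℝ)/((n:ℝ)-s) + 1/s, by positivity, fun B hB => ?_⟩
  have hbd1 : ∀ u ∈ Set.Ioc (0:ℝ) B,
      Real.exp (-B/u) * u^(-1-s) ≤ (n.factorial : ℝ) * B^(-(n:ℝ)) * u^((n:ℝ)-1-s) := by
    intro u hu
    obtain ⟨hu0, huB⟩ := hu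
    have h1 : Real.exp (-B/u) ≤ n.factorial * (u/B)^n := aux_exp_bound hB hu0 n
    have h2 : ((u/B)^n : ℝ) = u^(n:ℝ) * B^(-(n:ℝ)) := by
      rw [div_pow, ← Real.rpow_natCast u n, ← Real.rpow_natCast B n, Real.rpow_neg hB.le]
      ring
    calc Real.exp (-B/u) * u^(-1-s) ≤ (n.factorial * (u/B)^n) * u^(-1-s) :=
          mul_le_mul_of_nonneg_right h1 (Real.rpow_nonneg hu0.le _)
      _ = (n.factorial : ℝ) * B^(-(n:ℝ)) * (u^(n:ℝ) * u^(-1-s)) := by rw [h2]; ring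
      _ = (n.factorial : ℝ) * B^(-(n:ℝ)) * u^((n:ℝ)-1-s) := by
          rw [← Real.rpow_add hu0]; ring_nf
  have hint1 : IntegrableOn (fun u : ℝ => u^((n:ℝ)-1-s)) (Set.Ioc 0 B) := by
    have := intervalIntegral.intervalIntegrable_rpow' (a := 0) (b := B)
      (r := (n:ℝ)-1-s) (by linarith)
    rw [intervalIntegrable_iff] at this
    rwa [Set.uIoc_of_le hB.le] at this
  have hint1' : IntegrableOn (fun u => Real.exp (-B/u) * u^(-1-s)) (Set.Ioc 0 B) := by
    apply Integrable.mono' (hint1.const_mul ((n.factorial : ℝ) * B^(-(n:ℝ))))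
      (((aux_contOn B (-1-s)).mono Set.Ioc_subset_Ioi_self).aestronglyMeasurable
        measurableSet_Ioc)
    filter_upwards [ae_restrict_mem measurableSet_Ioc] with u hu
    rw [Real.norm_eq_abs, abs_of_nonneg (by have := hu.1; positivity)]
    simpa [mul_assoc] using hbd1 u hu
  have hint2 : IntegrableOn (fun u => Real.exp (-B/u) * u^(-1-s)) (Set.Ioi B) := by
    apply Integrable.mono' (integrableOn_Ioi_rpow_of_lt (a := -1-s) (by linarith) hB)
      (((aux_contOn B (-1-s)).mono (Set.Ioi_subset_Ioi hB.le)).aestronglyMeasurable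
        measurableSet_Ioi)
    filter_upwards [ae_restrict_mem measurableSet_Ioi] with u hu
    have hu0 : (0:ℝ) < u := hB.trans hu
    rw [Real.norm_eq_abs, abs_of_nonneg (by positivity)]
    calc Real.exp (-B/u) * u^(-1-s) ≤ 1 * u^(-1-s) := by
          apply mul_le_mul_of_nonneg_right _ (Real.rpow_nonneg hu0.le _)
          rw [Real.exp_le_one_iff, neg_div, neg_nonpos]
          positivity
      _ = u^(-1-s) := one_mul _
  have hunion : Set.Ioc (0:ℝ) B ∪ Set.Ioi B = Set.Ioi (0:ℝ) := Set.Ioc_union_Ioi_eq_Ioi hB.le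
  have hint : IntegrableOn (fun u => Real.exp (-B/u) * u^(-1-s)) (Set.Ioi (0:ℝ)) := by
    rw [← hunion]; exact hint1'.union hint2
  refine ⟨hint, ?_⟩
  have hsplit : (∫ u in Set.Ioi (0:ℝ), Real.exp (-B/u) * u^(-1-s)) =
      (∫ u in Set.Ioc (0:ℝ) B, Real.exp (-B/u) * u^(-1-s)) +
      (∫ u in Set.Ioi B, Real.exp (-B/u) * u^(-1-s)) := by
    rw [← setIntegral_union (Set.Ioc_disjoint_Ioi le_rfl) measurableSet_Ioi hint1' hint2, hunion]
  rw [hsplit]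
  have hval1 : (∫ u in Set.Ioc (0:ℝ) B, Real.exp (-B/u) * u^(-1-s)) ≤
      (n.factorial : ℝ)/((n:ℝ)-s) * B^(-s) := by
    calc (∫ u in Set.Ioc (0:ℝ) B, Real.exp (-B/u) * u^(-1-s))
        ≤ (∫ u in Set.Ioc (0:ℝ) B, (n.factorial : ℝ) * B^(-(n:ℝ)) * u^((n:ℝ)-1-s)) :=
          setIntegral_mono_on hint1' (hint1.const_mul _) measurableSet_Ioc hbd1
      _ = (n.factorial : ℝ) * B^(-(n:ℝ)) * (∫ u in Set.Ioc (0:ℝ) B, u^((n:ℝ)-1-s)) := by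
          rw [integral_const_mul]
      _ = (n.factorial : ℝ) * B^(-(n:ℝ)) * (B^((n:ℝ)-s)/((n:ℝ)-s)) := by
          rw [← intervalIntegral.integral_of_le hB.le,
            _root_.integral_rpow (Or.inl (by linarith))]
          rw [Real.zero_rpow (by intro hc; nlinarith),
            show ((n:ℝ)-1-s+1) = (n:ℝ)-s by ring, sub_zero]
      _ = (n.factorial : ℝ)/((n:ℝ)-s) * (B^(-(n:ℝ)) * B^((n:ℝ)-s)) := by ring
      _ = (n.factorial : ℝ)/((n:ℝ)-s) * B^(-s) := by
          rw [← Real.rpow_add hB]; ring_nf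
  have hval2 : (∫ u in Set.Ioi B, Real.exp (-B/u) * u^(-1-s)) ≤ 1/s * B^(-s) := by
    calc (∫ u in Set.Ioi B, Real.exp (-B/u) * u^(-1-s))
        ≤ (∫ u in Set.Ioi B, u^(-1-s)) := by
          apply setIntegral_mono_on hint2
            (integrableOn_Ioi_rpow_of_lt (by linarith) hB) measurableSet_Ioi
          intro u hu
          have hu0 : (0:ℝ) < u := hB.trans hu
          calc Real.exp (-B/u) * u^(-1-s) ≤ 1 * u^(-1-s) := by
                apply mul_le_mul_of_nonneg_right _ (Real.rpow_nonneg hu0.le _)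
                rw [Real.exp_le_one_iff, neg_div, neg_nonpos]
                positivity
            _ = u^(-1-s) := one_mul _
      _ = -B^(-1-s+1)/(-1-s+1) := integral_Ioi_rpow_of_lt (by linarith) hB
      _ = 1/s * B^(-s) := by
          rw [show (-1-s+1 : ℝ) = -s by ring]
          field_simp
  calc _ ≤ (n.factorial : ℝ)/((n:ℝ)-s) * B^(-s) + 1/s * B^(-s) := add_le_add hval1 hval2
    _ = ((n.factorial : ℝ)/((n:ℝ)-s) + 1/s) * B^(-s) := by ring

lemma aux_rpow_sqrt {s : ℝ} (hs : 0 ≤ s) (p : ℝ) : (Real.sqrt s)^p = s^(p/2) := by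
  rw [Real.sqrt_eq_rpow, ← Real.rpow_mul hs]
  ring_nf

lemma aux_one_le_rpow {x p : ℝ} (hx : 1 ≤ x) (hp : 0 ≤ p) : 1 ≤ x^p := by
  calc (1:ℝ) = 1^p := (Real.one_rpow p).symm
    _ ≤ x^p := Real.rpow_le_rpow zero_le_one hx hp

lemma aux_sqrt_bound {s : ℝ} (hs : 0 ≤ s) {p : ℝ} (hp : 0 ≤ p) :
    (1 + Real.sqrt s)^p ≤ 2^p * (1+s)^(p/2) := by
  have h2 : 0 ≤ Real.sqrt s := Real.sqrt_nonneg s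
  have h3 : (Real.sqrt s)^2 = s := Real.sq_sqrt hs
  have h4 : (Real.sqrt (1+s))^2 = 1+s := Real.sq_sqrt (by linarith)
  have h5 : 0 ≤ Real.sqrt (1+s) := Real.sqrt_nonneg _
  have h1 : 1 + Real.sqrt s ≤ 2 * Real.sqrt (1+s) := by
    have e1 : 1 + Real.sqrt s = Real.sqrt ((1 + Real.sqrt s)^2) :=
      (Real.sqrt_sq (by linarith)).symm
    have e2 : 2 * Real.sqrt (1+s) = Real.sqrt ((2 * Real.sqrt (1+s))^2) :=
      (Real.sqrt_sq (by linarith)).symm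
    rw [e1, e2]
    apply Real.sqrt_le_sqrt
    nlinarith [sq_nonneg (Real.sqrt s - 1)]
  calc (1+Real.sqrt s)^p ≤ (2*Real.sqrt (1+s))^p := Real.rpow_le_rpow (by linarith) h1 hp
    _ = 2^p * (Real.sqrt (1+s))^p := Real.mul_rpow (by norm_num) h5
    _ = 2^p * (1+s)^(p/2) := by rw [aux_rpow_sqrt (by linarith) p]

lemma aux_key1 {m₁ c₂ t ξ D dxy δ : ℝ} (hm₁a : m₁ ≤ c₂/2) (hm₁b : m₁ ≤ 1/8)
    (hc₂ : 0 < c₂) (ht8 : 8*c₂*ξ^2 ≤ t^2) (htri : D ≤ dxy + δ) (hδξ : δ ≤ ξ)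
    (hδ0 : 0 ≤ δ) (hd0 : 0 ≤ dxy) (hD0 : 0 ≤ D) :
    m₁*(t^2+D^2) ≤ c₂*dxy^2 + t^2/4 := by
  have hD2 : D^2 ≤ 2*dxy^2 + 2*ξ^2 := by
    nlinarith [sq_nonneg (dxy - δ), mul_nonneg (sub_nonneg.2 hδξ)
      (by linarith : (0:ℝ) ≤ ξ + δ)]
  nlinarith [mul_nonneg (sub_nonneg.2 hm₁b) (sq_nonneg t),
    mul_nonneg (sub_nonneg.2 hm₁a) (sq_nonneg D),
    mul_le_mul_of_nonneg_left hD2 (by positivity : (0:ℝ) ≤ c₂/2)]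

lemma aux_key2 {m c t D : ℝ} (hma : m ≤ c) (hmb : m ≤ 1/4) (hc : 0 ≤ c) :
    m*(t^2+D^2) ≤ c*D^2 + t^2/4 := by
  nlinarith [mul_nonneg (sub_nonneg.2 hmb) (sq_nonneg t),
    mul_nonneg (sub_nonneg.2 hma) (sq_nonneg D)]

end AuxLemmas

/-- The kernel subordinated to the heat kernel `h`, arising from the
Caffarelli–Silvestre extension problem:
`Q_t^σ(x,y) = (t^{2σ}/(2^{2σ}Γ(σ))) ∫₀^∞ h_u(x,y) e^{-t²/(4u)} u^{-1-σ} du`. -/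
noncomputable def Qker {M : Type*} (h : ℝ → M → M → ℝ) (σ t : ℝ) (x y : M) : ℝ :=
  (t ^ (2*σ) / ((2:ℝ) ^ (2*σ) * Real.Gamma σ)) *
    ∫ u in Set.Ioi (0:ℝ), h u x y * Real.exp (-(t^2)/(4*u)) * u ^ (-1-σ)

set_option maxHeartbeats 2000000 in
/-- Hölder-type continuity of the subordinated kernel `Q_t^σ` in the second
variable, with rate `t^{-θ}`, where `θ` is the Hölder exponent of the heat kernel. -/
theorem stmt_7
    {M : Type*} [MetricSpace M] [MeasurableSpace M] [BorelSpace M]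
    (μ : Measure M)
    (hVpos : ∀ (x : M) (r : ℝ), 0 < r → 0 < μ (ball x r))
    (hVfin : ∀ (x : M) (r : ℝ), 0 < r → μ (ball x r) < ⊤)
    -- volume comparability
    (ν ν' c₀ C₀ : ℝ) (hν' : 0 < ν') (hνν : ν' ≤ ν) (hc₀ : 0 < c₀) (hc₀C₀ : c₀ ≤ C₀)
    (hdoub : ∀ (x : M) (r R : ℝ), 0 < r → r ≤ R →
        c₀ * (R/r) ^ ν' ≤ (μ (ball x R)).toReal / (μ (ball x r)).toReal ∧
        (μ (ball x R)).toReal / (μ (ball x r)).toReal ≤ C₀ * (R/r) ^ ν)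
    (hcomp : ∀ (x y : M) (r : ℝ), 0 < r →
        (μ (ball x r)).toReal ≤ C₀ * (1 + dist x y / r) ^ ν * (μ (ball y r)).toReal)
    -- heat kernel with Li–Yau two-sided Gaussian estimate
    (h : ℝ → M → M → ℝ)
    (hhmeas : Measurable (fun p : ℝ × M × M => h p.1 p.2.1 p.2.2))
    (hhsym : ∀ u : ℝ, 0 < u → ∀ x y : M, h u x y = h u y x)
    (c₁ C₁ c₂ C₂ : ℝ) (hc₁ : 0 < c₁) (hC₁ : 0 < C₁) (hc₂ : 0 < c₂) (hC₂ : 0 < C₂)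
    (hLY : ∀ u : ℝ, 0 < u → ∀ x y : M,
        c₁ / (μ (ball y (Real.sqrt u))).toReal * Real.exp (-C₁ * (dist x y)^2 / u) ≤ h u x y ∧
        h u x y ≤ C₂ / (μ (ball y (Real.sqrt u))).toReal * Real.exp (-c₂ * (dist x y)^2 / u))
    -- Hölder continuity estimate for the heat kernel
    (θ CH cH : ℝ) (hθ0 : 0 < θ) (hθ1 : θ ≤ 1) (hCH : 0 < CH) (hcH : 0 < cH)
    (hHolder : ∀ u : ℝ, 0 < u → ∀ x y z : M, dist y z ≤ Real.sqrt u →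
        |h u x y - h u x z| ≤ (dist y z / Real.sqrt u) ^ θ *
          (CH / (μ (ball x (Real.sqrt u))).toReal) * Real.exp (-cH * (dist x y)^2 / u))
    (σ : ℝ) (hσ0 : 0 < σ) (hσ1 : σ < 1) :
    ∀ ξ : ℝ, 0 < ξ → ∃ Cξ t₀ : ℝ, 0 < Cξ ∧ 0 < t₀ ∧
      ∀ t : ℝ, t₀ ≤ t → ∀ x y x₀ : M, dist x₀ y < ξ →
        |Qker h σ t x y - Qker h σ t x x₀| ≤ Cξ * t ^ (-θ) * Qker h σ t x x₀ := by
  intro ξ hξ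
  -- basic positivity facts
  have hν0 : (0:ℝ) ≤ ν := le_trans hν'.le hνν
  have hC₀pos : (0:ℝ) < C₀ := lt_of_lt_of_le hc₀ hc₀C₀
  have hVpos' : ∀ (z : M) (r : ℝ), 0 < r → 0 < (μ (ball z r)).toReal :=
    fun z r hr => ENNReal.toReal_pos (hVpos z r hr).ne' (hVfin z r hr).ne
  have hVmono : ∀ (z : M) (r R : ℝ), 0 < r → r ≤ R →
      (μ (ball z r)).toReal ≤ (μ (ball z R)).toReal := fun z r R hr hrR =>
    ENNReal.toReal_mono (hVfin z R (hr.trans_le hrR)).ne (measure_mono (ball_subset_ball hrR))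
  have hh0 : ∀ u : ℝ, 0 < u → ∀ a b : M, 0 ≤ h u a b := by
    intro u hu a b
    refine le_trans ?_ (hLY u hu a b).1
    have := hVpos' b _ (Real.sqrt_pos.2 hu)
    positivity
  have hcompInv : ∀ (a b : M) (r : ℝ), 0 < r →
      1/(μ (ball b r)).toReal ≤ C₀*(1+dist a b/r)^ν/(μ (ball a r)).toReal := by
    intro a b r hr
    have hVa := hVpos' a r hr
    have hVb := hVpos' b r hr
    rw [div_le_div_iff₀ hVb hVa, one_mul]
    exact hcomp a b r hr
  -- fixed constants
  obtain ⟨G1, hG1pos, hG1⟩ := aux_gamma σ hσ0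
  obtain ⟨G2, hG2pos, hG2⟩ := aux_gamma (σ + θ/2) (by positivity)
  set m₁ : ℝ := min (c₂/2) (1/8) with hm₁def
  have hm₁0 : 0 < m₁ := lt_min (by positivity) (by norm_num)
  have hm₁a : m₁ ≤ c₂/2 := min_le_left _ _
  have hm₁b : m₁ ≤ 1/8 := min_le_right _ _
  set m₂ : ℝ := min cH (1/4) with hm₂def
  have hm₂0 : 0 < m₂ := lt_min hcH (by norm_num)
  have hm₂a : m₂ ≤ cH := min_le_left _ _
  have hm₂b : m₂ ≤ 1/4 := min_le_right _ _
  obtain ⟨P1, hP1pos, hP1⟩ := aux_poly ν (m₁/2) hν0 (by positivity)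
  obtain ⟨P2, hP2pos, hP2⟩ := aux_poly ν (m₂/2) hν0 (by positivity)
  set α : ℝ := m₁/(4*ξ^2) with hαdef
  have hα0 : 0 < α := by positivity
  set CC : ℝ := C₂*(C₀^2*2^ν)*P1 with hCCdef
  have hCC0 : 0 < CC := by positivity
  set CD : ℝ := ξ^θ*CH*(C₀^2*2^ν)*P2 with hCDdef
  have hCD0 : 0 < CD := by positivity
  set κ : ℝ := c₁ * Real.exp (-C₁ - 1/4) * (2:ℝ)^(-1-σ) / (C₀ * 2^(ν/2)) with hκdef
  have hκ0 : 0 < κ := by positivity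
  set CA : ℝ := 2*CC*G1*(m₁/4)^(-σ)*(1/α) with hCAdef
  have hCA0 : 0 < CA := by positivity
  set CB : ℝ := CD*G2*(m₂/2)^(-(σ+θ/2)) with hCBdef
  have hCB0 : 0 < CB := by positivity
  refine ⟨(CA+CB)/κ, max 1 (max ξ (Real.sqrt (8*c₂) * ξ)), by positivity, by positivity, ?_⟩
  intro t ht x y x₀ hxy
  -- facts about t
  have ht1 : (1:ℝ) ≤ t := le_trans (le_max_left _ _) ht
  have ht0 : (0:ℝ) < t := lt_of_lt_of_le one_pos ht1
  have htξ : ξ ≤ t := le_trans (le_trans (le_max_left _ _) (le_max_right _ _)) ht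
  have ht8 : 8*c₂*ξ^2 ≤ t^2 := by
    have h1 : Real.sqrt (8*c₂) * ξ ≤ t :=
      le_trans (le_trans (le_max_right _ _) (le_max_right _ _)) ht
    have h2 : (0:ℝ) ≤ Real.sqrt (8*c₂) * ξ := by positivity
    have h3 : (Real.sqrt (8*c₂) * ξ)^2 ≤ t^2 := pow_le_pow_left₀ h2 h1 2
    have h4 : (Real.sqrt (8*c₂))^2 = 8*c₂ := Real.sq_sqrt (by positivity)
    rw [mul_pow, h4] at h3
    exact h3
  have hC₀1 : (1:ℝ) ≤ C₀ := by
    have hV1 := hVpos' x 1 one_pos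
    have h := (hdoub x 1 1 one_pos le_rfl).2
    rw [div_self hV1.ne'] at h
    simpa [Real.one_rpow] using h
  set D : ℝ := dist x x₀ with hDdef
  have hD0 : (0:ℝ) ≤ D := dist_nonneg
  set A : ℝ := t^2 + D^2 with hAdef
  have hA0 : (0:ℝ) < A := by positivity
  have htA : t^2 ≤ A := le_add_of_nonneg_right (by positivity)
  have hDA : D^2 ≤ A := le_add_of_nonneg_left (by positivity)
  have htsA : t ≤ Real.sqrt A := by
    rw [Real.le_sqrt ht0.le hA0.le]
    exact htA
  have hDsA : D ≤ Real.sqrt A := by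
    rw [Real.le_sqrt hD0 hA0.le]
    exact hDA
  set VA : ℝ := (μ (ball x₀ (Real.sqrt A))).toReal with hVAdef
  have hVA : 0 < VA := hVpos' x₀ _ (Real.sqrt_pos.2 hA0)
  set δ : ℝ := dist x₀ y with hδdef
  have hδ0 : (0:ℝ) ≤ δ := dist_nonneg
  have hδξ : δ ≤ ξ := hxy.le
  have hδsA : δ ≤ Real.sqrt A := le_trans (le_trans hδξ htξ) htsA
  -- doubling comparison toward scale √A
  have hL7 : ∀ z : M, ∀ u : ℝ, 0 < u →
      1/(μ (ball z (Real.sqrt u))).toReal ≤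
        C₀*(1+A/u)^(ν/2)/(μ (ball z (Real.sqrt A))).toReal := by
    intro z u hu
    have hsu := Real.sqrt_pos.2 hu
    have hsA := Real.sqrt_pos.2 hA0
    have hVu := hVpos' z _ hsu
    have hVzA := hVpos' z _ hsA
    have h1Au : (1:ℝ) ≤ 1 + A/u := by
      have h := div_nonneg hA0.le hu.le
      linarith only [h]
    rcases le_total u A with hcase | hcase
    · have h2 := (hdoub z (Real.sqrt u) (Real.sqrt A) hsu (Real.sqrt_le_sqrt hcase)).2
      have hq : (Real.sqrt A/Real.sqrt u)^ν = (A/u)^(ν/2) := by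
        rw [← Real.sqrt_div hA0.le, aux_rpow_sqrt (by positivity)]
      rw [div_le_div_iff₀ hVu hVzA, one_mul]
      rw [div_le_iff₀ hVu] at h2
      calc (μ (ball z (Real.sqrt A))).toReal
          ≤ C₀*(Real.sqrt A/Real.sqrt u)^ν * (μ (ball z (Real.sqrt u))).toReal := h2
        _ = C₀*(A/u)^(ν/2) * (μ (ball z (Real.sqrt u))).toReal := by rw [hq]
        _ ≤ C₀*(1+A/u)^(ν/2) * (μ (ball z (Real.sqrt u))).toReal := by
            apply mul_le_mul_of_nonneg_right _ hVu.le
            apply mul_le_mul_of_nonneg_left _ hC₀pos.le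
            exact Real.rpow_le_rpow (div_nonneg hA0.le hu.le)
              (by linarith only [div_nonneg hA0.le hu.le]) (by positivity)
    · have hmono := hVmono z _ _ hsA (Real.sqrt_le_sqrt hcase)
      have h1 : 1/(μ (ball z (Real.sqrt u))).toReal ≤ 1/(μ (ball z (Real.sqrt A))).toReal :=
        one_div_le_one_div_of_le hVzA hmono
      have h4 : (1:ℝ) ≤ C₀*(1+A/u)^(ν/2) := by
        calc (1:ℝ) = 1*1 := (one_mul 1).symm
          _ ≤ C₀*(1+A/u)^(ν/2) :=
              mul_le_mul hC₀1 (aux_one_le_rpow h1Au (by positivity)) zero_le_one hC₀pos.le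
      calc 1/(μ (ball z (Real.sqrt u))).toReal ≤ 1/(μ (ball z (Real.sqrt A))).toReal := h1
        _ = 1 * (1/(μ (ball z (Real.sqrt A))).toReal) := (one_mul _).symm
        _ ≤ (C₀*(1+A/u)^(ν/2)) * (1/(μ (ball z (Real.sqrt A))).toReal) :=
            mul_le_mul_of_nonneg_right h4 (by positivity)
        _ = C₀*(1+A/u)^(ν/2)/(μ (ball z (Real.sqrt A))).toReal := by ring
  have hVgen : ∀ w : M, dist x₀ w ≤ Real.sqrt A → ∀ u : ℝ, 0 < u →
      1/(μ (ball w (Real.sqrt u))).toReal ≤ (C₀^2*2^ν) * (1+A/u)^ν / VA := by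
    intro w hw u hu
    have hsu := Real.sqrt_pos.2 hu
    have h1 := hcompInv x₀ w (Real.sqrt u) hsu
    have h1Au : (1:ℝ) ≤ 1 + A/u := by
      have h := div_nonneg hA0.le hu.le
      linarith only [h]
    have h2 : (1+dist x₀ w/Real.sqrt u)^ν ≤ 2^ν * (1+A/u)^(ν/2) := by
      calc (1+dist x₀ w/Real.sqrt u)^ν ≤ (1+Real.sqrt (A/u))^ν := by
            apply Real.rpow_le_rpow (by positivity) _ hν0
            have hstep : dist x₀ w/Real.sqrt u ≤ Real.sqrt A/Real.sqrt u := by gcongr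
            rw [← Real.sqrt_div hA0.le] at hstep
            linarith only [hstep]
        _ ≤ 2^ν * (1+A/u)^(ν/2) := aux_sqrt_bound (by positivity) hν0
    have h3 := hL7 x₀ u hu
    calc 1/(μ (ball w (Real.sqrt u))).toReal
        ≤ C₀*(1+dist x₀ w/Real.sqrt u)^ν/(μ (ball x₀ (Real.sqrt u))).toReal := h1
      _ = (C₀*(1+dist x₀ w/Real.sqrt u)^ν) * (1/(μ (ball x₀ (Real.sqrt u))).toReal) := by ring
      _ ≤ (C₀*(2^ν*(1+A/u)^(ν/2))) * (C₀*(1+A/u)^(ν/2)/VA) := by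
          apply mul_le_mul (mul_le_mul_of_nonneg_left h2 hC₀pos.le) h3 (by positivity)
            (by positivity)
      _ = (C₀^2*2^ν) * ((1+A/u)^(ν/2)*(1+A/u)^(ν/2)) / VA := by ring
      _ = (C₀^2*2^ν) * (1+A/u)^ν / VA := by
          rw [← Real.rpow_add (by positivity : (0:ℝ) < 1+A/u), add_halves]
  -- absorption of polynomial factors into exponentials
  have habsorb : ∀ (mm PP : ℝ), 0 < mm →
      (∀ s : ℝ, 0 ≤ s → (1+s)^ν * Real.exp (-(mm/2*s)) ≤ PP) →
      ∀ u : ℝ, 0 < u →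
        (1+A/u)^ν * Real.exp (-(mm*A)/u) ≤ PP * Real.exp (-(mm*A/2)/u) := by
    intro mm PP hmm hPP u hu
    have he : Real.exp (-(mm*A)/u) =
        Real.exp (-(mm/2*(A/u))) * Real.exp (-(mm*A/2)/u) := by
      rw [← Real.exp_add]
      congr 1
      field_simp
      ring
    rw [he, ← mul_assoc]
    exact mul_le_mul_of_nonneg_right (hPP (A/u) (by positivity)) (Real.exp_nonneg _)
  -- exponential comparisons
  have htri : D ≤ dist x y + δ := by
    rw [hDdef, hδdef]
    calc dist x x₀ ≤ dist x y + dist y x₀ := dist_triangle _ _ _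
      _ = dist x y + dist x₀ y := by rw [dist_comm y x₀]
  have hexpF : ∀ u : ℝ, 0 < u →
      Real.exp (-c₂*(dist x y)^2/u) * Real.exp (-(t^2)/(4*u)) ≤ Real.exp (-(m₁*A)/u) := by
    intro u hu
    rw [← Real.exp_add, Real.exp_le_exp]
    have hd0 : (0:ℝ) ≤ dist x y := dist_nonneg
    have hkey : m₁*A ≤ c₂*(dist x y)^2 + t^2/4 := by
      rw [hAdef]
      exact aux_key1 hm₁a hm₁b hc₂ ht8 htri hδξ hδ0 hd0 hD0
    rw [show -c₂*(dist x y)^2/u + -(t^2)/(4*u) = (-(c₂*(dist x y)^2 + t^2/4))/u by ring,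
      show -(m₁*A)/u = (-(m₁*A))/u by ring]
    exact (div_le_div_iff_of_pos_right hu).mpr (by linarith only [hkey])
  have hexpG : ∀ u : ℝ, 0 < u →
      Real.exp (-c₂*D^2/u) * Real.exp (-(t^2)/(4*u)) ≤ Real.exp (-(m₁*A)/u) := by
    intro u hu
    rw [← Real.exp_add, Real.exp_le_exp]
    have hkey : m₁*A ≤ c₂*D^2 + t^2/4 := by
      rw [hAdef]
      exact aux_key2 (by linarith only [hm₁a, hc₂.le]) (by linarith only [hm₁b]) hc₂.le
    rw [show -c₂*D^2/u + -(t^2)/(4*u) = (-(c₂*D^2 + t^2/4))/u by ring,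
      show -(m₁*A)/u = (-(m₁*A))/u by ring]
    exact (div_le_div_iff_of_pos_right hu).mpr (by linarith only [hkey])
  have hexpH : ∀ u : ℝ, 0 < u →
      Real.exp (-cH*D^2/u) * Real.exp (-(t^2)/(4*u)) ≤ Real.exp (-(m₂*A)/u) := by
    intro u hu
    rw [← Real.exp_add, Real.exp_le_exp]
    have hkey : m₂*A ≤ cH*D^2 + t^2/4 := by
      rw [hAdef]
      exact aux_key2 hm₂a hm₂b hcH.le
    rw [show -cH*D^2/u + -(t^2)/(4*u) = (-(cH*D^2 + t^2/4))/u by ring,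
      show -(m₂*A)/u = (-(m₂*A))/u by ring]
    exact (div_le_div_iff_of_pos_right hu).mpr (by linarith only [hkey])
  -- pointwise upper bounds for the integrands
  have hFbd : ∀ u : ℝ, 0 < u → h u x y * Real.exp (-(t^2)/(4*u)) * u^(-1-σ) ≤
      (CC/VA) * (Real.exp (-(m₁*A/2)/u) * u^(-1-σ)) := by
    intro u hu
    have hsu := Real.sqrt_pos.2 hu
    have hVy := hVpos' y _ hsu
    have e0 : (0:ℝ) ≤ Real.exp (-(t^2)/(4*u)) := (Real.exp_pos _).le
    have p0 : (0:ℝ) ≤ u^(-1-σ) := Real.rpow_nonneg hu.le _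
    have step1 := (hLY u hu x y).2
    have step2 := hVgen y (by rw [← hδdef]; exact hδsA) u hu
    have step3 := hexpF u hu
    have step4 := habsorb m₁ P1 hm₁0 hP1 u hu
    calc h u x y * Real.exp (-(t^2)/(4*u)) * u^(-1-σ)
        ≤ (C₂/(μ (ball y (Real.sqrt u))).toReal * Real.exp (-c₂*(dist x y)^2/u)) *
            Real.exp (-(t^2)/(4*u)) * u^(-1-σ) :=
          mul_le_mul_of_nonneg_right (mul_le_mul_of_nonneg_right step1 e0) p0
      _ = (C₂ * (1/(μ (ball y (Real.sqrt u))).toReal)) *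
            (Real.exp (-c₂*(dist x y)^2/u) * Real.exp (-(t^2)/(4*u))) * u^(-1-σ) := by ring
      _ ≤ (C₂ * ((C₀^2*2^ν) * (1+A/u)^ν / VA)) * Real.exp (-(m₁*A)/u) * u^(-1-σ) := by
          apply mul_le_mul_of_nonneg_right _ p0
          apply mul_le_mul (mul_le_mul_of_nonneg_left step2 hC₂.le) step3 (by positivity)
            (by positivity)
      _ = (C₂*(C₀^2*2^ν)/VA) * ((1+A/u)^ν * Real.exp (-(m₁*A)/u)) * u^(-1-σ) := by ring
      _ ≤ (C₂*(C₀^2*2^ν)/VA) * (P1 * Real.exp (-(m₁*A/2)/u)) * u^(-1-σ) :=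
          mul_le_mul_of_nonneg_right (mul_le_mul_of_nonneg_left step4 (by positivity)) p0
      _ = (CC/VA) * (Real.exp (-(m₁*A/2)/u) * u^(-1-σ)) := by rw [hCCdef]; ring
  have hGbd : ∀ u : ℝ, 0 < u → h u x x₀ * Real.exp (-(t^2)/(4*u)) * u^(-1-σ) ≤
      (CC/VA) * (Real.exp (-(m₁*A/2)/u) * u^(-1-σ)) := by
    intro u hu
    have hsu := Real.sqrt_pos.2 hu
    have hVx₀ := hVpos' x₀ _ hsu
    have e0 : (0:ℝ) ≤ Real.exp (-(t^2)/(4*u)) := (Real.exp_pos _).le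
    have p0 : (0:ℝ) ≤ u^(-1-σ) := Real.rpow_nonneg hu.le _
    have step1 := (hLY u hu x x₀).2
    rw [← hDdef] at step1
    have step2 := hVgen x₀ (by rw [dist_self]; positivity) u hu
    have step3 := hexpG u hu
    have step4 := habsorb m₁ P1 hm₁0 hP1 u hu
    calc h u x x₀ * Real.exp (-(t^2)/(4*u)) * u^(-1-σ)
        ≤ (C₂/(μ (ball x₀ (Real.sqrt u))).toReal * Real.exp (-c₂*D^2/u)) *
            Real.exp (-(t^2)/(4*u)) * u^(-1-σ) :=
          mul_le_mul_of_nonneg_right (mul_le_mul_of_nonneg_right step1 e0) p0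
      _ = (C₂ * (1/(μ (ball x₀ (Real.sqrt u))).toReal)) *
            (Real.exp (-c₂*D^2/u) * Real.exp (-(t^2)/(4*u))) * u^(-1-σ) := by ring
      _ ≤ (C₂ * ((C₀^2*2^ν) * (1+A/u)^ν / VA)) * Real.exp (-(m₁*A)/u) * u^(-1-σ) := by
          apply mul_le_mul_of_nonneg_right _ p0
          apply mul_le_mul (mul_le_mul_of_nonneg_left step2 hC₂.le) step3 (by positivity)
            (by positivity)
      _ = (C₂*(C₀^2*2^ν)/VA) * ((1+A/u)^ν * Real.exp (-(m₁*A)/u)) * u^(-1-σ) := by ring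
      _ ≤ (C₂*(C₀^2*2^ν)/VA) * (P1 * Real.exp (-(m₁*A/2)/u)) * u^(-1-σ) :=
          mul_le_mul_of_nonneg_right (mul_le_mul_of_nonneg_left step4 (by positivity)) p0
      _ = (CC/VA) * (Real.exp (-(m₁*A/2)/u) * u^(-1-σ)) := by rw [hCCdef]; ring
  -- measurability and integrability of the integrands
  have hmeasw : ∀ w : M, AEStronglyMeasurable
      (fun u => h u x w * Real.exp (-(t^2)/(4*u)) * u^(-1-σ))
      (volume.restrict (Set.Ioi 0)) := by
    intro w
    have m1 : Measurable (fun u => h u x w) := by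
      have heq : (fun u : ℝ => h u x w) =
          (fun p : ℝ × M × M => h p.1 p.2.1 p.2.2) ∘ (fun u : ℝ => (u, (x, w))) := rfl
      rw [heq]
      exact hhmeas.comp (measurable_id.prodMk measurable_const)
    have m2 : Measurable (fun u : ℝ => Real.exp (-(t^2)/(4*u))) :=
      Real.measurable_exp.comp (measurable_const.div (measurable_const.mul measurable_id))
    have c3 : ContinuousOn (fun u : ℝ => u^(-1-σ)) (Set.Ioi 0) :=
      ContinuousOn.rpow_const continuousOn_id (fun z hz => Or.inl (ne_of_gt hz))
    exact ((m1.mul m2).aestronglyMeasurable).mul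
      (c3.aestronglyMeasurable measurableSet_Ioi)
  have hmajint := (hG1 (m₁*A/2) (by positivity)).1
  have hFint : IntegrableOn (fun u => h u x y * Real.exp (-(t^2)/(4*u)) * u^(-1-σ))
      (Set.Ioi 0) := by
    apply Integrable.mono' (hmajint.const_mul (CC/VA)) (hmeasw y)
    filter_upwards [ae_restrict_mem measurableSet_Ioi] with u hu
    rw [Real.norm_eq_abs, abs_of_nonneg (mul_nonneg (mul_nonneg (hh0 u hu x y)
      (Real.exp_nonneg _)) (Real.rpow_nonneg (le_of_lt hu) _))]
    exact hFbd u hu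
  have hGint : IntegrableOn (fun u => h u x x₀ * Real.exp (-(t^2)/(4*u)) * u^(-1-σ))
      (Set.Ioi 0) := by
    apply Integrable.mono' (hmajint.const_mul (CC/VA)) (hmeasw x₀)
    filter_upwards [ae_restrict_mem measurableSet_Ioi] with u hu
    rw [Real.norm_eq_abs, abs_of_nonneg (mul_nonneg (mul_nonneg (hh0 u hu x x₀)
      (Real.exp_nonneg _)) (Real.rpow_nonneg (le_of_lt hu) _))]
    exact hGbd u hu
  -- lower bound for the integral against x₀
  have hsub2 : Set.Ioc A (2*A) ⊆ Set.Ioi (0:ℝ) := fun u hu => lt_trans hA0 hu.1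
  have hs2A0 : (0:ℝ) < 2*A := by positivity
  have hV2A := hVpos' x₀ _ (Real.sqrt_pos.2 hs2A0)
  set mlow : ℝ := c₁/(μ (ball x₀ (Real.sqrt (2*A)))).toReal *
      Real.exp (-C₁-1/4) * (2*A)^(-1-σ) with hmlowdef
  have hmlow0 : 0 ≤ mlow := by positivity
  have hpt3 : ∀ u ∈ Set.Ioc A (2*A),
      mlow ≤ h u x x₀ * Real.exp (-(t^2)/(4*u)) * u^(-1-σ) := by
    intro u hu
    obtain ⟨huA, hu2A⟩ := hu
    have hu0 : (0:ℝ) < u := lt_trans hA0 huA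
    have hVu0 := hVpos' x₀ _ (Real.sqrt_pos.2 hu0)
    have step1 := (hLY u hu0 x x₀).1
    rw [← hDdef] at step1
    have hVle : (μ (ball x₀ (Real.sqrt u))).toReal ≤
        (μ (ball x₀ (Real.sqrt (2*A)))).toReal :=
      hVmono x₀ _ _ (Real.sqrt_pos.2 hu0) (Real.sqrt_le_sqrt hu2A)
    have hb1 : c₁/(μ (ball x₀ (Real.sqrt (2*A)))).toReal ≤
        c₁/(μ (ball x₀ (Real.sqrt u))).toReal :=
      div_le_div_of_nonneg_left hc₁.le hVu0 hVle
    have he1 : Real.exp (-C₁-1/4) ≤ Real.exp (-C₁*D^2/u) * Real.exp (-(t^2)/(4*u)) := by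
      rw [← Real.exp_add, Real.exp_le_exp]
      have h1 : C₁*D^2/u ≤ C₁ := by
        rw [div_le_iff₀ hu0]
        have hDu : D^2 ≤ u := le_trans hDA huA.le
        exact mul_le_mul_of_nonneg_left hDu hC₁.le
      have h2 : t^2/(4*u) ≤ 1/4 := by
        rw [div_le_div_iff₀ (by positivity) (by norm_num : (0:ℝ) < 4)]
        have htu : t^2 ≤ u := le_trans htA huA.le
        linarith only [htu]
      have h3 : -C₁*D^2/u = -(C₁*D^2/u) := by ring
      have h4 : -(t^2)/(4*u) = -(t^2/(4*u)) := by ring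
      rw [h3, h4]
      linarith only [h1, h2]
    have hp1 : (2*A)^(-1-σ) ≤ u^(-1-σ) :=
      Real.rpow_le_rpow_of_nonpos hu0 hu2A (by linarith only [hσ0])
    calc mlow = (c₁/(μ (ball x₀ (Real.sqrt (2*A)))).toReal) * Real.exp (-C₁-1/4) *
          (2*A)^(-1-σ) := by rw [hmlowdef]
      _ ≤ ((c₁/(μ (ball x₀ (Real.sqrt u))).toReal) *
            (Real.exp (-C₁*D^2/u) * Real.exp (-(t^2)/(4*u)))) * u^(-1-σ) := by
          apply mul_le_mul (mul_le_mul hb1 he1 (Real.exp_nonneg _) (by positivity)) hp1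
            (Real.rpow_nonneg hs2A0.le _) (by positivity)
      _ = (c₁/(μ (ball x₀ (Real.sqrt u))).toReal * Real.exp (-C₁*D^2/u)) *
            Real.exp (-(t^2)/(4*u)) * u^(-1-σ) := by ring
      _ ≤ h u x x₀ * Real.exp (-(t^2)/(4*u)) * u^(-1-σ) :=
          mul_le_mul_of_nonneg_right (mul_le_mul_of_nonneg_right step1 (Real.exp_nonneg _))
            (Real.rpow_nonneg hu0.le _)
  have h3 : mlow * A ≤ ∫ u in Set.Ioc A (2*A),
      h u x x₀ * Real.exp (-(t^2)/(4*u)) * u^(-1-σ) := by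
    have hconst_int : IntegrableOn (fun _ : ℝ => mlow) (Set.Ioc A (2*A)) :=
      integrableOn_const measure_Ioc_lt_top.ne
    calc mlow * A = ∫ _ in Set.Ioc A (2*A), mlow := by
          rw [setIntegral_const, Real.volume_real_Ioc_of_le (by linarith only [hA0] : A ≤ 2*A),
            smul_eq_mul]
          ring
      _ ≤ _ := setIntegral_mono_on hconst_int (hGint.mono_set hsub2) measurableSet_Ioc hpt3
  have h4 : (∫ u in Set.Ioc A (2*A), h u x x₀ * Real.exp (-(t^2)/(4*u)) * u^(-1-σ)) ≤
      ∫ u in Set.Ioi (0:ℝ), h u x x₀ * Real.exp (-(t^2)/(4*u)) * u^(-1-σ) := by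
    apply setIntegral_mono_set hGint
    · filter_upwards [ae_restrict_mem measurableSet_Ioi] with u hu
      exact mul_nonneg (mul_nonneg (hh0 u hu x x₀) (Real.exp_nonneg _))
        (Real.rpow_nonneg (le_of_lt hu) _)
    · exact HasSubset.Subset.eventuallyLE hsub2
  have h5 : κ*(A^(-σ)/VA) ≤ mlow * A := by
    have hdb := (hdoub x₀ (Real.sqrt A) (Real.sqrt (2*A)) (Real.sqrt_pos.2 hA0)
      (Real.sqrt_le_sqrt (by linarith only [hA0]))).2
    have hq : Real.sqrt (2*A)/Real.sqrt A = Real.sqrt 2 := by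
      rw [Real.sqrt_mul (by norm_num : (0:ℝ) ≤ 2) A]
      have := Real.sqrt_pos.2 hA0
      field_simp
    have hq2 : (Real.sqrt (2*A)/Real.sqrt A)^ν = 2^(ν/2) := by
      rw [hq, aux_rpow_sqrt (by norm_num : (0:ℝ) ≤ 2)]
    rw [div_le_iff₀ (hVpos' x₀ _ (Real.sqrt_pos.2 hA0)), hq2] at hdb
    have hb2 : c₁/(C₀*2^(ν/2)*VA) ≤ c₁/(μ (ball x₀ (Real.sqrt (2*A)))).toReal := by
      apply div_le_div_of_nonneg_left hc₁.le hV2A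
      calc (μ (ball x₀ (Real.sqrt (2*A)))).toReal ≤
          C₀*2^(ν/2)*(μ (ball x₀ (Real.sqrt A))).toReal := hdb
        _ = C₀*2^(ν/2)*VA := by rw [hVAdef]
    have hsplit2 : ((2:ℝ)*A)^(-1-σ) = 2^(-1-σ)*A^(-1-σ) := Real.mul_rpow (by norm_num) hA0.le
    have hAA : A^(-1-σ)*A = A^(-σ) := by
      nth_rewrite 2 [← Real.rpow_one A]
      rw [← Real.rpow_add hA0]
      ring_nf
    have h2ν : (0:ℝ) < 2^(ν/2) := Real.rpow_pos_of_pos two_pos _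
    calc κ*(A^(-σ)/VA)
        = (c₁/(C₀*2^(ν/2)*VA)) * Real.exp (-C₁-1/4) * ((2:ℝ)*A)^(-1-σ) * A := by
          rw [hκdef, hsplit2, ← hAA]
          field_simp
      _ ≤ (c₁/(μ (ball x₀ (Real.sqrt (2*A)))).toReal) * Real.exp (-C₁-1/4) *
            ((2:ℝ)*A)^(-1-σ) * A := by
          apply mul_le_mul_of_nonneg_right _ hA0.le
          apply mul_le_mul_of_nonneg_right _ (Real.rpow_nonneg hs2A0.le _)
          exact mul_le_mul_of_nonneg_right hb2 (Real.exp_nonneg _)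
      _ = mlow * A := by rw [hmlowdef]
  have hGlow : κ*(A^(-σ)/VA) ≤
      ∫ u in Set.Ioi (0:ℝ), h u x x₀ * Real.exp (-(t^2)/(4*u)) * u^(-1-σ) :=
    le_trans h5 (le_trans h3 h4)
  -- splitting of the difference
  have hξ2 : (0:ℝ) < ξ^2 := by positivity
  have hunionξ : Set.Ioc (0:ℝ) (ξ^2) ∪ Set.Ioi (ξ^2) = Set.Ioi (0:ℝ) :=
    Set.Ioc_union_Ioi_eq_Ioi hξ2.le
  have hsubA : Set.Ioc (0:ℝ) (ξ^2) ⊆ Set.Ioi (0:ℝ) := Set.Ioc_subset_Ioi_self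
  have hsubB : Set.Ioi (ξ^2) ⊆ Set.Ioi (0:ℝ) := Set.Ioi_subset_Ioi hξ2.le
  have hFGsub : IntegrableOn (fun u => h u x y * Real.exp (-(t^2)/(4*u)) * u^(-1-σ) -
      h u x x₀ * Real.exp (-(t^2)/(4*u)) * u^(-1-σ)) (Set.Ioi 0) := hFint.sub hGint
  have hFGabs : IntegrableOn (fun u => |h u x y * Real.exp (-(t^2)/(4*u)) * u^(-1-σ) -
      h u x x₀ * Real.exp (-(t^2)/(4*u)) * u^(-1-σ)|) (Set.Ioi 0) := hFGsub.abs
  have habs0 : |(∫ u in Set.Ioi (0:ℝ), h u x y * Real.exp (-(t^2)/(4*u)) * u^(-1-σ)) -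
      (∫ u in Set.Ioi (0:ℝ), h u x x₀ * Real.exp (-(t^2)/(4*u)) * u^(-1-σ))| ≤
      ∫ u in Set.Ioi (0:ℝ), |h u x y * Real.exp (-(t^2)/(4*u)) * u^(-1-σ) -
        h u x x₀ * Real.exp (-(t^2)/(4*u)) * u^(-1-σ)| := by
    rw [← integral_sub hFint hGint]
    have hn := norm_integral_le_integral_norm (μ := volume.restrict (Set.Ioi 0))
      (fun u => h u x y * Real.exp (-(t^2)/(4*u)) * u^(-1-σ) -
        h u x x₀ * Real.exp (-(t^2)/(4*u)) * u^(-1-σ))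
    simpa [Real.norm_eq_abs] using hn
  have hsplitd : (∫ u in Set.Ioi (0:ℝ), |h u x y * Real.exp (-(t^2)/(4*u)) * u^(-1-σ) -
        h u x x₀ * Real.exp (-(t^2)/(4*u)) * u^(-1-σ)|) =
      (∫ u in Set.Ioc (0:ℝ) (ξ^2), |h u x y * Real.exp (-(t^2)/(4*u)) * u^(-1-σ) -
        h u x x₀ * Real.exp (-(t^2)/(4*u)) * u^(-1-σ)|) +
      (∫ u in Set.Ioi (ξ^2), |h u x y * Real.exp (-(t^2)/(4*u)) * u^(-1-σ) -
        h u x x₀ * Real.exp (-(t^2)/(4*u)) * u^(-1-σ)|) := by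
    rw [← setIntegral_union (Set.Ioc_disjoint_Ioi le_rfl) measurableSet_Ioi
      (hFGabs.mono_set hsubA) (hFGabs.mono_set hsubB), hunionξ]
  -- piece 1 : small times
  have hmaj1 := (hG1 (m₁*A/4) (by positivity)).1
  have hmaj1c : IntegrableOn (fun u => (2*CC*Real.exp (-(α*t^2))/VA) *
      (Real.exp (-(m₁*A/4)/u) * u^(-1-σ))) (Set.Ioi 0) :=
    hmaj1.const_mul _
  have hptd1 : ∀ u ∈ Set.Ioc (0:ℝ) (ξ^2),
      |h u x y * Real.exp (-(t^2)/(4*u)) * u^(-1-σ) -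
        h u x x₀ * Real.exp (-(t^2)/(4*u)) * u^(-1-σ)| ≤
      (2*CC*Real.exp (-(α*t^2))/VA) * (Real.exp (-(m₁*A/4)/u) * u^(-1-σ)) := by
    intro u hu
    obtain ⟨hu0, huξ⟩ := hu
    have key : Real.exp (-(m₁*A/2)/u) ≤ Real.exp (-(α*t^2)) * Real.exp (-(m₁*A/4)/u) := by
      rw [← Real.exp_add, Real.exp_le_exp]
      have h1 : α*t^2 ≤ (m₁*A/4)/u := by
        rw [le_div_iff₀ hu0]
        have h2 : t^2*u ≤ A*ξ^2 := by
          have h3 : t^2*u ≤ t^2*ξ^2 := mul_le_mul_of_nonneg_left huξ (sq_nonneg t)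
          have h4 : t^2*ξ^2 ≤ A*ξ^2 := mul_le_mul_of_nonneg_right htA (sq_nonneg ξ)
          linarith only [h3, h4]
        calc α*t^2*u = (m₁/(4*ξ^2))*(t^2*u) := by rw [hαdef]; ring
          _ ≤ (m₁/(4*ξ^2))*(A*ξ^2) := mul_le_mul_of_nonneg_left h2 (by positivity)
          _ = m₁*A/4 := by field_simp
      have h5 : -(m₁*A/2)/u = -(m₁*A/4)/u + -(m₁*A/4)/u := by ring
      have h6 : -(m₁*A/4)/u = -((m₁*A/4)/u) := by ring
      rw [h5, h6]
      linarith only [h1]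
    have hF0 : 0 ≤ h u x y * Real.exp (-(t^2)/(4*u)) * u^(-1-σ) :=
      mul_nonneg (mul_nonneg (hh0 u hu0 x y) (Real.exp_nonneg _)) (Real.rpow_nonneg hu0.le _)
    have hG0 : 0 ≤ h u x x₀ * Real.exp (-(t^2)/(4*u)) * u^(-1-σ) :=
      mul_nonneg (mul_nonneg (hh0 u hu0 x x₀) (Real.exp_nonneg _)) (Real.rpow_nonneg hu0.le _)
    calc |h u x y * Real.exp (-(t^2)/(4*u)) * u^(-1-σ) -
          h u x x₀ * Real.exp (-(t^2)/(4*u)) * u^(-1-σ)|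
        ≤ |h u x y * Real.exp (-(t^2)/(4*u)) * u^(-1-σ)| +
          |h u x x₀ * Real.exp (-(t^2)/(4*u)) * u^(-1-σ)| := abs_sub _ _
      _ = h u x y * Real.exp (-(t^2)/(4*u)) * u^(-1-σ) +
          h u x x₀ * Real.exp (-(t^2)/(4*u)) * u^(-1-σ) := by
          rw [abs_of_nonneg hF0, abs_of_nonneg hG0]
      _ ≤ (CC/VA) * (Real.exp (-(m₁*A/2)/u) * u^(-1-σ)) +
          (CC/VA) * (Real.exp (-(m₁*A/2)/u) * u^(-1-σ)) :=
          add_le_add (hFbd u hu0) (hGbd u hu0)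
      _ = (2*CC/VA) * (Real.exp (-(m₁*A/2)/u) * u^(-1-σ)) := by ring
      _ ≤ (2*CC/VA) * ((Real.exp (-(α*t^2)) * Real.exp (-(m₁*A/4)/u)) * u^(-1-σ)) := by
          apply mul_le_mul_of_nonneg_left
            (mul_le_mul_of_nonneg_right key (Real.rpow_nonneg hu0.le _)) (by positivity)
      _ = (2*CC*Real.exp (-(α*t^2))/VA) * (Real.exp (-(m₁*A/4)/u) * u^(-1-σ)) := by ring
  have hint1 : (∫ u in Set.Ioc (0:ℝ) (ξ^2), |h u x y * Real.exp (-(t^2)/(4*u)) * u^(-1-σ) -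
        h u x x₀ * Real.exp (-(t^2)/(4*u)) * u^(-1-σ)|) ≤
      (2*CC*Real.exp (-(α*t^2))/VA) * (G1*(m₁*A/4)^(-σ)) := by
    calc (∫ u in Set.Ioc (0:ℝ) (ξ^2), |h u x y * Real.exp (-(t^2)/(4*u)) * u^(-1-σ) -
          h u x x₀ * Real.exp (-(t^2)/(4*u)) * u^(-1-σ)|)
        ≤ ∫ u in Set.Ioc (0:ℝ) (ξ^2), (2*CC*Real.exp (-(α*t^2))/VA) *
            (Real.exp (-(m₁*A/4)/u) * u^(-1-σ)) :=
          setIntegral_mono_on (hFGabs.mono_set hsubA)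
            (hmaj1c.mono_set hsubA) measurableSet_Ioc hptd1
      _ ≤ ∫ u in Set.Ioi (0:ℝ), (2*CC*Real.exp (-(α*t^2))/VA) *
            (Real.exp (-(m₁*A/4)/u) * u^(-1-σ)) := by
          apply setIntegral_mono_set hmaj1c
          · filter_upwards [ae_restrict_mem measurableSet_Ioi] with u hu
            have hu' : (0:ℝ) < u := hu
            exact mul_nonneg (by positivity)
              (mul_nonneg (Real.exp_nonneg _) (Real.rpow_nonneg hu'.le _))
          · exact HasSubset.Subset.eventuallyLE hsubA
      _ = (2*CC*Real.exp (-(α*t^2))/VA) *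
            ∫ u in Set.Ioi (0:ℝ), Real.exp (-(m₁*A/4)/u) * u^(-1-σ) := integral_const_mul _ _
      _ ≤ (2*CC*Real.exp (-(α*t^2))/VA) * (G1*(m₁*A/4)^(-σ)) := by
          exact mul_le_mul_of_nonneg_left ((hG1 (m₁*A/4) (by positivity)).2)
            (by positivity)
  -- piece 2 : Hölder regime
  have hmaj2 := (hG2 (m₂*A/2) (by positivity)).1
  have hmaj2c : IntegrableOn (fun u => (CD/VA) *
      (Real.exp (-(m₂*A/2)/u) * u^(-1-(σ+θ/2)))) (Set.Ioi 0) :=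
    hmaj2.const_mul _
  have hptd2 : ∀ u ∈ Set.Ioi (ξ^2),
      |h u x y * Real.exp (-(t^2)/(4*u)) * u^(-1-σ) -
        h u x x₀ * Real.exp (-(t^2)/(4*u)) * u^(-1-σ)| ≤
      (CD/VA) * (Real.exp (-(m₂*A/2)/u) * u^(-1-(σ+θ/2))) := by
    intro u hu
    have hu0 : (0:ℝ) < u := lt_trans hξ2 hu
    have hsu := Real.sqrt_pos.2 hu0
    have e0 : (0:ℝ) ≤ Real.exp (-(t^2)/(4*u)) := Real.exp_nonneg _
    have p0 : (0:ℝ) ≤ u^(-1-σ) := Real.rpow_nonneg hu0.le _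
    have hξsu : ξ ≤ Real.sqrt u := by
      have hh := Real.sqrt_le_sqrt (le_of_lt hu)
      rwa [Real.sqrt_sq hξ.le] at hh
    have hδu : dist x₀ y ≤ Real.sqrt u := by
      rw [← hδdef]
      linarith only [hδξ, hξsu]
    have hH := hHolder u hu0 x x₀ y hδu
    rw [← hδdef, ← hDdef] at hH
    have habs : |h u x y * Real.exp (-(t^2)/(4*u)) * u^(-1-σ) -
        h u x x₀ * Real.exp (-(t^2)/(4*u)) * u^(-1-σ)| =
        |h u x x₀ - h u x y| * (Real.exp (-(t^2)/(4*u)) * u^(-1-σ)) := by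
      have heq : h u x y * Real.exp (-(t^2)/(4*u)) * u^(-1-σ) -
          h u x x₀ * Real.exp (-(t^2)/(4*u)) * u^(-1-σ) =
          (h u x y - h u x x₀) * (Real.exp (-(t^2)/(4*u)) * u^(-1-σ)) := by ring
      rw [heq, abs_mul, abs_of_nonneg (mul_nonneg e0 p0), abs_sub_comm]
    have b1 : (δ/Real.sqrt u)^θ ≤ ξ^θ * u^(-(θ/2)) := by
      calc (δ/Real.sqrt u)^θ ≤ (ξ/Real.sqrt u)^θ := by
            apply Real.rpow_le_rpow (by positivity) _ hθ0.le
            exact (div_le_div_iff_of_pos_right hsu).mpr hδξ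
        _ = ξ^θ/(Real.sqrt u)^θ := Real.div_rpow hξ.le (Real.sqrt_nonneg u) θ
        _ = ξ^θ/u^(θ/2) := by rw [aux_rpow_sqrt hu0.le θ]
        _ = ξ^θ * u^(-(θ/2)) := by
            rw [Real.rpow_neg hu0.le, div_eq_mul_inv]
    have b2 : CH/(μ (ball x (Real.sqrt u))).toReal ≤
        CH * ((C₀^2*2^ν)*(1+A/u)^ν/VA) := by
      have hx' : dist x₀ x ≤ Real.sqrt A := by
        rw [dist_comm x₀ x, ← hDdef]
        exact hDsA
      have hb := hVgen x hx' u hu0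
      calc CH/(μ (ball x (Real.sqrt u))).toReal
          = CH * (1/(μ (ball x (Real.sqrt u))).toReal) := by ring
        _ ≤ CH * ((C₀^2*2^ν)*(1+A/u)^ν/VA) := mul_le_mul_of_nonneg_left hb hCH.le
    have b3 := hexpH u hu0
    have b4 := habsorb m₂ P2 hm₂0 hP2 u hu0
    have b5 : u^(-(θ/2)) * u^(-1-σ) = u^(-1-(σ+θ/2)) := by
      rw [← Real.rpow_add hu0]
      ring_nf
    rw [habs]
    calc |h u x x₀ - h u x y| * (Real.exp (-(t^2)/(4*u)) * u^(-1-σ))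
        ≤ ((δ/Real.sqrt u)^θ * (CH/(μ (ball x (Real.sqrt u))).toReal) *
            Real.exp (-cH*D^2/u)) * (Real.exp (-(t^2)/(4*u)) * u^(-1-σ)) :=
          mul_le_mul_of_nonneg_right hH (mul_nonneg e0 p0)
      _ = (δ/Real.sqrt u)^θ * (CH/(μ (ball x (Real.sqrt u))).toReal) *
            (Real.exp (-cH*D^2/u) * Real.exp (-(t^2)/(4*u))) * u^(-1-σ) := by ring
      _ ≤ (ξ^θ * u^(-(θ/2))) * (CH * ((C₀^2*2^ν)*(1+A/u)^ν/VA)) *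
            Real.exp (-(m₂*A)/u) * u^(-1-σ) := by
          apply mul_le_mul_of_nonneg_right _ p0
          apply mul_le_mul (mul_le_mul b1 b2 (by positivity) (by positivity)) b3
            (by positivity) (by positivity)
      _ = (ξ^θ*CH*(C₀^2*2^ν)/VA) * ((1+A/u)^ν * Real.exp (-(m₂*A)/u)) *
            (u^(-(θ/2)) * u^(-1-σ)) := by ring
      _ ≤ (ξ^θ*CH*(C₀^2*2^ν)/VA) * (P2 * Real.exp (-(m₂*A/2)/u)) *
            (u^(-(θ/2)) * u^(-1-σ)) := by
          apply mul_le_mul_of_nonneg_right (mul_le_mul_of_nonneg_left b4 (by positivity))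
            (mul_nonneg (Real.rpow_nonneg hu0.le _) p0)
      _ = (CD/VA) * (Real.exp (-(m₂*A/2)/u) * (u^(-(θ/2)) * u^(-1-σ))) := by
          rw [hCDdef]; ring
      _ = (CD/VA) * (Real.exp (-(m₂*A/2)/u) * u^(-1-(σ+θ/2))) := by rw [b5]
  have hint2 : (∫ u in Set.Ioi (ξ^2), |h u x y * Real.exp (-(t^2)/(4*u)) * u^(-1-σ) -
        h u x x₀ * Real.exp (-(t^2)/(4*u)) * u^(-1-σ)|) ≤
      (CD/VA) * (G2*(m₂*A/2)^(-(σ+θ/2))) := by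
    calc (∫ u in Set.Ioi (ξ^2), |h u x y * Real.exp (-(t^2)/(4*u)) * u^(-1-σ) -
          h u x x₀ * Real.exp (-(t^2)/(4*u)) * u^(-1-σ)|)
        ≤ ∫ u in Set.Ioi (ξ^2), (CD/VA) *
            (Real.exp (-(m₂*A/2)/u) * u^(-1-(σ+θ/2))) := by
          apply setIntegral_mono_on (hFGabs.mono_set hsubB)
            (hmaj2c.mono_set hsubB) measurableSet_Ioi hptd2
      _ ≤ ∫ u in Set.Ioi (0:ℝ), (CD/VA) *
            (Real.exp (-(m₂*A/2)/u) * u^(-1-(σ+θ/2))) := by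
          apply setIntegral_mono_set hmaj2c
          · filter_upwards [ae_restrict_mem measurableSet_Ioi] with u hu
            have hu' : (0:ℝ) < u := hu
            exact mul_nonneg (by positivity)
              (mul_nonneg (Real.exp_nonneg _) (Real.rpow_nonneg hu'.le _))
          · exact HasSubset.Subset.eventuallyLE hsubB
      _ = (CD/VA) * ∫ u in Set.Ioi (0:ℝ),
            Real.exp (-(m₂*A/2)/u) * u^(-1-(σ+θ/2)) := integral_const_mul _ _
      _ ≤ (CD/VA) * (G2*(m₂*A/2)^(-(σ+θ/2))) :=
          mul_le_mul_of_nonneg_left ((hG2 (m₂*A/2) (by positivity)).2) (by positivity)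
  -- converting to the final form
  have hconv1 : (2*CC*Real.exp (-(α*t^2))/VA) * (G1*(m₁*A/4)^(-σ)) ≤
      CA * (t^(-θ) * (A^(-σ)/VA)) := by
    have hsplitm : (m₁*A/4)^(-σ) = (m₁/4)^(-σ)*A^(-σ) := by
      rw [show m₁*A/4 = (m₁/4)*A by ring, Real.mul_rpow (by positivity) hA0.le]
    have hexpα : Real.exp (-(α*t^2)) ≤ (1/α) * t^(-θ) := by
      have h1 : Real.exp (-(α*t^2)) ≤ 1/(α*t^2) := by
        rw [Real.exp_neg, inv_eq_one_div]
        apply one_div_le_one_div_of_le (by positivity)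
        linarith only [Real.add_one_le_exp (α*t^2)]
      have h2 : (t^2)⁻¹ ≤ t^(-θ) := by
        have h3 : t^(-(2:ℝ)) ≤ t^(-θ) :=
          Real.rpow_le_rpow_of_exponent_le ht1 (by linarith only [hθ1])
        rwa [Real.rpow_neg ht0.le, show ((2:ℝ)) = ((2:ℕ):ℝ) by norm_num,
          Real.rpow_natCast] at h3
      calc Real.exp (-(α*t^2)) ≤ 1/(α*t^2) := h1
        _ = (1/α)*(t^2)⁻¹ := by ring
        _ ≤ (1/α)*t^(-θ) := mul_le_mul_of_nonneg_left h2 (by positivity)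
    calc (2*CC*Real.exp (-(α*t^2))/VA) * (G1*(m₁*A/4)^(-σ))
        = (2*CC*G1*(m₁/4)^(-σ)) * Real.exp (-(α*t^2)) * (A^(-σ)/VA) := by
          rw [hsplitm]; ring
      _ ≤ (2*CC*G1*(m₁/4)^(-σ)) * ((1/α)*t^(-θ)) * (A^(-σ)/VA) := by
          apply mul_le_mul_of_nonneg_right
            (mul_le_mul_of_nonneg_left hexpα (by positivity)) (by positivity)
      _ = CA * (t^(-θ)*(A^(-σ)/VA)) := by rw [hCAdef]; ring
  have hconv2 : (CD/VA)*(G2*(m₂*A/2)^(-(σ+θ/2))) ≤ CB * (t^(-θ)*(A^(-σ)/VA)) := by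
    have hsplitm : (m₂*A/2)^(-(σ+θ/2)) = (m₂/2)^(-(σ+θ/2))*A^(-(σ+θ/2)) := by
      rw [show m₂*A/2 = (m₂/2)*A by ring, Real.mul_rpow (by positivity) hA0.le]
    have hAsp : A^(-(σ+θ/2)) = A^(-σ)*A^(-(θ/2)) := by
      rw [← Real.rpow_add hA0]
      ring_nf
    have hAθ : A^(-(θ/2)) ≤ t^(-θ) := by
      have h1 : (Real.sqrt A)^(-θ) ≤ t^(-θ) :=
        Real.rpow_le_rpow_of_nonpos ht0 htsA (by linarith only [hθ0])
      rwa [aux_rpow_sqrt hA0.le (-θ), show (-θ/2 : ℝ) = -(θ/2) by ring] at h1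
    calc (CD/VA)*(G2*(m₂*A/2)^(-(σ+θ/2)))
        = (CD*G2*(m₂/2)^(-(σ+θ/2))) * A^(-(θ/2)) * (A^(-σ)/VA) := by
          rw [hsplitm, hAsp]; ring
      _ ≤ (CD*G2*(m₂/2)^(-(σ+θ/2))) * t^(-θ) * (A^(-σ)/VA) := by
          apply mul_le_mul_of_nonneg_right
            (mul_le_mul_of_nonneg_left hAθ (by positivity)) (by positivity)
      _ = CB * (t^(-θ)*(A^(-σ)/VA)) := by rw [hCBdef]; ring
  have hdiff : |(∫ u in Set.Ioi (0:ℝ), h u x y * Real.exp (-(t^2)/(4*u)) * u^(-1-σ)) -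
      (∫ u in Set.Ioi (0:ℝ), h u x x₀ * Real.exp (-(t^2)/(4*u)) * u^(-1-σ))| ≤
      (CA+CB) * (t^(-θ)*(A^(-σ)/VA)) := by
    calc |(∫ u in Set.Ioi (0:ℝ), h u x y * Real.exp (-(t^2)/(4*u)) * u^(-1-σ)) -
        (∫ u in Set.Ioi (0:ℝ), h u x x₀ * Real.exp (-(t^2)/(4*u)) * u^(-1-σ))|
        ≤ ∫ u in Set.Ioi (0:ℝ), |h u x y * Real.exp (-(t^2)/(4*u)) * u^(-1-σ) -
            h u x x₀ * Real.exp (-(t^2)/(4*u)) * u^(-1-σ)| := habs0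
      _ = _ + _ := hsplitd
      _ ≤ CA * (t^(-θ)*(A^(-σ)/VA)) + CB * (t^(-θ)*(A^(-σ)/VA)) :=
          add_le_add (le_trans hint1 hconv1) (le_trans hint2 hconv2)
      _ = (CA+CB) * (t^(-θ)*(A^(-σ)/VA)) := by ring
  -- conclusion
  have hK : 0 < t^(2*σ)/((2:ℝ)^(2*σ)*Real.Gamma σ) := by
    have hΓ := Real.Gamma_pos_of_pos hσ0
    have h2 := Real.rpow_pos_of_pos two_pos (2*σ)
    have h3 := Real.rpow_pos_of_pos ht0 (2*σ)
    positivity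
  have htθ : (0:ℝ) < t^(-θ) := Real.rpow_pos_of_pos ht0 _
  have hGint0 : A^(-σ)/VA ≤ (1/κ) *
      (∫ u in Set.Ioi (0:ℝ), h u x x₀ * Real.exp (-(t^2)/(4*u)) * u^(-1-σ)) := by
    calc A^(-σ)/VA = (1/κ)*(κ*(A^(-σ)/VA)) := by field_simp
      _ ≤ (1/κ) * (∫ u in Set.Ioi (0:ℝ),
            h u x x₀ * Real.exp (-(t^2)/(4*u)) * u^(-1-σ)) :=
          mul_le_mul_of_nonneg_left hGlow (by positivity)
  unfold Qker
  rw [← mul_sub, abs_mul, abs_of_pos hK]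
  calc (t^(2*σ)/((2:ℝ)^(2*σ)*Real.Gamma σ)) *
      |(∫ u in Set.Ioi (0:ℝ), h u x y * Real.exp (-(t^2)/(4*u)) * u^(-1-σ)) -
        (∫ u in Set.Ioi (0:ℝ), h u x x₀ * Real.exp (-(t^2)/(4*u)) * u^(-1-σ))|
      ≤ (t^(2*σ)/((2:ℝ)^(2*σ)*Real.Gamma σ)) * ((CA+CB) * (t^(-θ)*(A^(-σ)/VA))) :=
        mul_le_mul_of_nonneg_left hdiff hK.le
    _ ≤ (t^(2*σ)/((2:ℝ)^(2*σ)*Real.Gamma σ)) * ((CA+CB) * (t^(-θ)*((1/κ) *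
          (∫ u in Set.Ioi (0:ℝ), h u x x₀ * Real.exp (-(t^2)/(4*u)) * u^(-1-σ))))) := by
        apply mul_le_mul_of_nonneg_left _ hK.le
        apply mul_le_mul_of_nonneg_left _ (by positivity : (0:ℝ) ≤ CA+CB)
        exact mul_le_mul_of_nonneg_left hGint0 htθ.le
    _ = (CA+CB)/κ * t^(-θ) * ((t^(2*σ)/((2:ℝ)^(2*σ)*Real.Gamma σ)) *
          (∫ u in Set.Ioi (0:ℝ), h u x x₀ * Real.exp (-(t^2)/(4*u)) * u^(-1-σ))) := by
        ring
end

section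
/- Let α ∈ (0,2). For every C₀ > 0, κ ≥ 0, r > 0 and N > 0 there exist constants C > 0 and t₀ > 0 (depending on C₀, κ, α, r, N and the volume comparability constants) such that for all t ≥ t₀ and all x, y ∈ M: V(x, t^{1/α} + d(x,y)) · (t^{1/α} + d(x,y))^{α+2κ} · ∫₀^r V(y,√u)^{−1} exp(−C₀ d(x,y)²/u) η_t(u) u^{−κ} du ≤ C t^{−N}. -/
open MeasureTheory Metric Real Filter

lemma aux_pow_exp_s9 (q b : ℝ) (hq : 0 ≤ q) (hb : 0 < b) :
    ∃ K : ℝ, 0 < K ∧ ∀ s : ℝ, 0 ≤ s → s ^ q * Real.exp (-(b * s)) ≤ K := by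
  set n : ℕ := ⌈q⌉₊ + 1 with hn
  have hnpos : (0:ℝ) < n := by positivity
  have hqn : q ≤ (n:ℝ) := (Nat.le_ceil q).trans (by exact_mod_cast Nat.le_succ _)
  set Mc : ℝ := (2 * n / b) ^ (n:ℝ) with hM
  have hMpos : 0 < Mc := Real.rpow_pos_of_pos (by positivity) _
  refine ⟨max 1 Mc, lt_of_lt_of_le one_pos (le_max_left _ _), fun s hs => ?_⟩
  rcases le_or_gt s 1 with h1 | h1
  · have h2 : s ^ q ≤ 1 := Real.rpow_le_one hs h1 hq
    have h3 : Real.exp (-(b*s)) ≤ 1 := Real.exp_le_one_iff.mpr (by nlinarith)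
    calc s ^ q * Real.exp (-(b*s)) ≤ 1 * 1 :=
          mul_le_mul h2 h3 (Real.exp_pos _).le one_pos.le
      _ ≤ max 1 Mc := by simp
  · have hs1 : (1:ℝ) ≤ s := h1.le
    have h2 : s ^ q ≤ s ^ (n:ℝ) := Real.rpow_le_rpow_of_exponent_le hs1 hqn
    have hx : b * s / (2*n) ≤ Real.exp (b*s/(2*n)) := by
      have := Real.add_one_le_exp (b*s/(2*n)); linarith
    have hs' : s ≤ (2*n/b) * Real.exp (b*s/(2*n)) := by
      have heq : s = (2*n/b) * (b*s/(2*n)) := by field_simp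
      calc s = (2*n/b) * (b*s/(2*n)) := heq
        _ ≤ (2*n/b) * Real.exp (b*s/(2*n)) :=
            mul_le_mul_of_nonneg_left hx (by positivity)
    have h3 : s ^ (n:ℝ) ≤ Mc * Real.exp (b*s/2) := by
      calc s ^ (n:ℝ) ≤ ((2*n/b) * Real.exp (b*s/(2*n))) ^ (n:ℝ) :=
            Real.rpow_le_rpow hs hs' (by positivity)
        _ = Mc * (Real.exp (b*s/(2*n))) ^ (n:ℝ) :=
            Real.mul_rpow (by positivity) (Real.exp_pos _).le
        _ = Mc * Real.exp (b*s/2) := by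
            rw [← Real.exp_mul]
            congr 1
            field_simp
    calc s ^ q * Real.exp (-(b*s)) ≤ s ^ (n:ℝ) * Real.exp (-(b*s)) :=
          mul_le_mul_of_nonneg_right h2 (Real.exp_pos _).le
      _ ≤ (Mc * Real.exp (b*s/2)) * Real.exp (-(b*s)) :=
          mul_le_mul_of_nonneg_right h3 (Real.exp_pos _).le
      _ = Mc * Real.exp (b*s/2 - b*s) := by rw [mul_assoc, ← Real.exp_add]; ring_nf
      _ ≤ Mc * 1 := by
          refine mul_le_mul_of_nonneg_left ?_ hMpos.le
          exact Real.exp_le_one_iff.mpr (by nlinarith)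
      _ ≤ max 1 Mc := by simp

lemma aux_pow_exp_rpow (q b γ : ℝ) (hq : 0 ≤ q) (hb : 0 < b) (hγ : 0 < γ) :
    ∃ K : ℝ, 0 < K ∧ ∀ t : ℝ, 0 ≤ t → t ^ q * Real.exp (-(b * t ^ γ)) ≤ K := by
  obtain ⟨K, hK, hKb⟩ := aux_pow_exp_s9 (q/γ) b (by positivity) hb
  refine ⟨K, hK, fun t ht => ?_⟩
  have h1 : t ^ q = (t ^ γ) ^ (q/γ) := by
    rw [← Real.rpow_mul ht]; congr 1; field_simp
  rw [h1]
  exact hKb _ (Real.rpow_nonneg ht _)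

lemma aux_decay (a b γ N : ℝ) (hb : 0 < b) (hγ : 0 < γ) (haN : 0 ≤ a + N) :
    ∃ K : ℝ, 0 < K ∧ ∀ t : ℝ, 1 ≤ t → t ^ a * Real.exp (-(b * t ^ γ)) ≤ K * t ^ (-N) := by
  obtain ⟨K, hK, hKb⟩ := aux_pow_exp_rpow (a+N) b γ haN hb hγ
  refine ⟨K, hK, fun t ht => ?_⟩
  have ht0 : (0:ℝ) < t := lt_of_lt_of_le one_pos ht
  have h1 : t ^ a = t ^ (a+N) * t ^ (-N) := by
    rw [← Real.rpow_add ht0]; ring_nf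
  rw [h1, mul_comm (t ^ (a+N)) (t ^ (-N)), mul_assoc, mul_comm K (t ^ (-N))]
  exact mul_le_mul_of_nonneg_left (hKb t ht0.le) (Real.rpow_nonneg ht0.le _)

set_option maxHeartbeats 2000000 in
/-- the truncated subordination-type integral
`∫₀^r V(y,√u)⁻¹ e^{-A d(x,y)²/u} η_t(u) u^{-κ} du` decays faster than any power of `t`,
uniformly in `x, y`, after normalization. -/
theorem stmt_9
    {M : Type*} [MetricSpace M] [MeasurableSpace M] [BorelSpace M]
    (μ : Measure M)
    (hVpos : ∀ (x : M) (r : ℝ), 0 < r → 0 < μ (ball x r))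
    (hVfin : ∀ (x : M) (r : ℝ), 0 < r → μ (ball x r) < ⊤)
    -- volume comparability
    (ν ν' c₀ C₀ : ℝ) (hν' : 0 < ν') (hνν : ν' ≤ ν) (hc₀ : 0 < c₀) (hc₀C₀ : c₀ ≤ C₀)
    (hdoub : ∀ (x : M) (r R : ℝ), 0 < r → r ≤ R →
        c₀ * (R/r) ^ ν' ≤ (μ (ball x R)).toReal / (μ (ball x r)).toReal ∧
        (μ (ball x R)).toReal / (μ (ball x r)).toReal ≤ C₀ * (R/r) ^ ν)
    (hcomp : ∀ (x y : M) (r : ℝ), 0 < r →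
        (μ (ball x r)).toReal ≤ C₀ * (1 + dist x y / r) ^ ν * (μ (ball y r)).toReal)
    -- stable subordinator densities with two-sided bounds
    (α : ℝ) (hα0 : 0 < α) (hα2 : α < 2)
    (η : ℝ → ℝ → ℝ)
    (hηmeas : Measurable (fun p : ℝ × ℝ => η p.1 p.2))
    (hηpos : ∀ t : ℝ, 0 < t → ∀ u : ℝ, 0 < u → 0 < η t u)
    (cs Cs : ℝ) (hcs : 0 < cs) (hcsCs : cs ≤ Cs)
    (hηbd : ∀ t : ℝ, 0 < t → ∀ u : ℝ, 0 < u →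
        (u ≤ t ^ (2/α) →
          cs ≤ η t u / (t ^ (1/(2-α)) * u ^ (-((4-α)/(4-2*α))) *
              Real.exp (-(((2-α)/2) * (α/2) ^ (α/(2-α))) * t ^ (2/(2-α)) * u ^ (-(α/(2-α))))) ∧
          η t u / (t ^ (1/(2-α)) * u ^ (-((4-α)/(4-2*α))) *
              Real.exp (-(((2-α)/2) * (α/2) ^ (α/(2-α))) * t ^ (2/(2-α)) * u ^ (-(α/(2-α))))) ≤ Cs) ∧
        (t ^ (2/α) < u →
          cs ≤ η t u / (t * u ^ (-1-α/2)) ∧ η t u / (t * u ^ (-1-α/2)) ≤ Cs)) :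
    ∀ A : ℝ, 0 < A → ∀ κ : ℝ, 0 ≤ κ → ∀ r : ℝ, 0 < r → ∀ N : ℝ, 0 < N →
      ∃ C t₀ : ℝ, 0 < C ∧ 0 < t₀ ∧ ∀ t : ℝ, t₀ ≤ t → ∀ x y : M,
        (μ (ball x (t ^ (1/α) + dist x y))).toReal *
            (t ^ (1/α) + dist x y) ^ (α + 2*κ) *
            (∫ u in Set.Ioc (0:ℝ) r,
              ((μ (ball y (Real.sqrt u))).toReal)⁻¹ *
                Real.exp (-A * (dist x y)^2 / u) * η t u * u ^ (-κ))
          ≤ C * t ^ (-N) := by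
  intro A hA κ hκ r hr N hN
  have h2α : (0:ℝ) < 2 - α := by linarith
  have hν : (0:ℝ) < ν := lt_of_lt_of_le hν' hνν
  have hC₀ : (0:ℝ) < C₀ := lt_of_lt_of_le hc₀ hc₀C₀
  have hCs : (0:ℝ) < Cs := lt_of_lt_of_le hcs hcsCs
  set β : ℝ := α / (2 - α) with hβdef
  have hβ : 0 < β := div_pos hα0 h2α
  set cα : ℝ := ((2-α)/2) * (α/2) ^ β with hcαdef
  have hcα : 0 < cα := mul_pos (by positivity) (Real.rpow_pos_of_pos (by linarith) _)
  set q : ℝ := (4-α)/(4-2*α) with hqdef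
  have hq : 0 < q := div_pos (by linarith) (by linarith)
  set γ : ℝ := 2/(2-α) with hγdef
  have hγ : 0 < γ := by positivity
  set m : ℝ := κ + q + ν/2 with hmdef
  have hm : 0 < m := by rw [hmdef]; linarith
  set p : ℝ := ν + α + 2*κ with hpdef
  have hp : 0 < p := by rw [hpdef]; linarith
  set t₀ : ℝ := max 1 (r ^ (α/2)) with ht₀def
  have ht₀1 : (1:ℝ) ≤ t₀ := le_max_left _ _
  have ht₀ : 0 < t₀ := lt_of_lt_of_le one_pos ht₀1
  set b : ℝ := (cα/2) * t₀ ^ γ with hbdef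
  have hb : 0 < b := mul_pos (by positivity) (Real.rpow_pos_of_pos ht₀ _)
  set c₁ : ℝ := (cα/2) * r ^ (-β) with hc₁def
  have hc₁ : 0 < c₁ := mul_pos (by positivity) (Real.rpow_pos_of_pos hr _)
  obtain ⟨K₁, hK₁, hK₁b⟩ := aux_pow_exp_s9 (m/β) b (div_nonneg hm.le hβ.le) hb
  obtain ⟨KA, hKA, hKAb⟩ := aux_decay (p/α + 1/(2-α)) c₁ γ N hc₁ hγ
    (by have h1 := div_pos hp hα0; have h2 : (0:ℝ) < 1/(2-α) := one_div_pos.mpr h2α; linarith)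
  obtain ⟨KC, hKC, hKCb⟩ := aux_decay (1/(2-α)) c₁ γ N hc₁ hγ
    (by have h2 : (0:ℝ) < 1/(2-α) := one_div_pos.mpr h2α; linarith)
  obtain ⟨KB, hKB, hKBb⟩ := aux_pow_exp_s9 (p/2) A (by positivity) hA
  have volpos : ∀ (z : M) (ρ : ℝ), 0 < ρ → 0 < (μ (ball z ρ)).toReal :=
    fun z ρ hρ => ENNReal.toReal_pos (hVpos z ρ hρ).ne' (hVfin z ρ hρ).ne
  have hβne : β ≠ 0 := ne_of_gt hβ
  have hrt₀ : r ≤ t₀ ^ (2/α) := by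
    rcases le_total r 1 with h | h
    · calc r ≤ 1 := h
        _ = t₀ ^ (0:ℝ) := (Real.rpow_zero t₀).symm
        _ ≤ t₀ ^ (2/α) := Real.rpow_le_rpow_of_exponent_le ht₀1 (by positivity)
    · have hr2 : r ^ (α/2) ≤ t₀ := le_max_right _ _
      calc r = (r ^ (α/2)) ^ (2/α) := by
            rw [← Real.rpow_mul hr.le, show (α/2)*(2/α) = 1 by field_simp, Real.rpow_one]
        _ ≤ t₀ ^ (2/α) := Real.rpow_le_rpow (Real.rpow_nonneg hr.le _) hr2 (by positivity)
  clear_value β cα q γ m p t₀ b c₁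
  refine ⟨(C₀^3 * Cs * 2 ^ (ν:ℝ) * K₁ * r) * (2 ^ (p:ℝ) * (KA + r ^ (p/2) * KB * KC)),
    t₀, by positivity, ht₀, ?_⟩
  intro t ht x y
  have ht1 : (1:ℝ) ≤ t := ht₀1.trans ht
  have ht0 : (0:ℝ) < t := lt_of_lt_of_le one_pos ht1
  set d : ℝ := dist x y with hd
  have hd0 : 0 ≤ d := dist_nonneg
  set R : ℝ := t ^ (1/α) + d with hRdef
  have htα : 0 < t ^ (1/α) := Real.rpow_pos_of_pos ht0 _
  have hRpos : 0 < R := by positivity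
  have hrt : r ≤ t ^ (2/α) :=
    hrt₀.trans (Real.rpow_le_rpow ht₀.le ht (by positivity))
  have hsrt : Real.sqrt r ≤ t ^ (1/α) := by
    rw [Real.sqrt_eq_rpow]
    calc r ^ (1/2:ℝ) ≤ (t ^ (2/α)) ^ (1/2:ℝ) := Real.rpow_le_rpow hr.le hrt (by norm_num)
      _ = t ^ (1/α) := by
          rw [← Real.rpow_mul ht0.le]; congr 1; field_simp
  have hsrR : Real.sqrt r ≤ R := hsrt.trans (le_add_of_nonneg_right hd0)
  have hsr0 : 0 < Real.sqrt r := Real.sqrt_pos.mpr hr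
  set W : ℝ := (μ (ball y (Real.sqrt r))).toReal with hWdef
  have hWpos : 0 < W := volpos y _ hsr0
  set Dc : ℝ := C₀ * Cs * r ^ (ν/2) * K₁ * W⁻¹ * t ^ (1/(2-α)) *
      Real.exp (-(c₁ * t ^ γ)) * Real.exp (-(A/r * d^2)) with hDcdef
  have hDcpos : 0 < Dc := by positivity
  -- pointwise bound on the integrand
  have key : ∀ u ∈ Set.Ioc (0:ℝ) r,
      ‖((μ (ball y (Real.sqrt u))).toReal)⁻¹ *
        Real.exp (-A * d^2 / u) * η t u * u ^ (-κ)‖ ≤ Dc := by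
    intro u hu
    obtain ⟨hu0, hur⟩ := hu
    have hut : u ≤ t ^ (2/α) := hur.trans hrt
    set Wu : ℝ := (μ (ball y (Real.sqrt u))).toReal with hWudef
    have hWu : 0 < Wu := volpos y _ (Real.sqrt_pos.mpr hu0)
    have hηnn : 0 ≤ η t u := (hηpos t ht0 u hu0).le
    have hden : 0 < t ^ (1/(2-α)) * u ^ (-q) *
        Real.exp (-cα * t ^ γ * u ^ (-β)) := by positivity
    have hη : η t u ≤ Cs * (t ^ (1/(2-α)) * u ^ (-q) *
        Real.exp (-cα * t ^ γ * u ^ (-β))) := by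
      have h := ((hηbd t ht0 u hu0).1 hut).2
      rw [div_le_iff₀ hden] at h
      exact h
    -- inverse volume bound
    have hWub : Wu⁻¹ ≤ C₀ * (Real.sqrt r / Real.sqrt u) ^ ν * W⁻¹ := by
      have hd2 := (hdoub y (Real.sqrt u) (Real.sqrt r) (Real.sqrt_pos.mpr hu0)
        (Real.sqrt_le_sqrt hur)).2
      rw [div_le_iff₀ hWu] at hd2
      rw [← hWdef] at hd2
      have hcoef : 0 < C₀ * (Real.sqrt r / Real.sqrt u) ^ ν := by positivity
      rw [show C₀ * (Real.sqrt r / Real.sqrt u) ^ ν * W⁻¹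
          = (C₀ * (Real.sqrt r / Real.sqrt u) ^ ν) / W by ring, le_div_iff₀ hWpos]
      calc Wu⁻¹ * W ≤ Wu⁻¹ * (C₀ * (Real.sqrt r / Real.sqrt u) ^ ν * Wu) :=
            mul_le_mul_of_nonneg_left hd2 (by positivity)
        _ = C₀ * (Real.sqrt r / Real.sqrt u) ^ ν := by field_simp
    have hE2 : Real.exp (-A * d^2 / u) ≤ Real.exp (-(A/r * d^2)) := by
      apply Real.exp_le_exp.mpr
      have h1 : A * d^2 / r ≤ A * d^2 / u :=
        div_le_div_of_nonneg_left (by positivity) hu0 hur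
      have e1 : -A * d^2 / u = -(A * d^2 / u) := by ring
      have e2 : -(A/r * d^2) = -(A * d^2 / r) := by ring
      rw [e1, e2]
      linarith
    have hE3 : Real.exp (-cα * t ^ γ * u ^ (-β)) ≤
        Real.exp (-(c₁ * t ^ γ)) * Real.exp (-(b * u ^ (-β))) := by
      rw [← Real.exp_add]
      apply Real.exp_le_exp.mpr
      have hub : (0:ℝ) ≤ u ^ (-β) := Real.rpow_nonneg hu0.le _
      have htγ : (0:ℝ) ≤ t ^ γ := Real.rpow_nonneg ht0.le _
      have h1 : r ^ (-β) ≤ u ^ (-β) := by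
        rw [Real.rpow_neg hr.le, Real.rpow_neg hu0.le]
        exact inv_anti₀ (Real.rpow_pos_of_pos hu0 _)
          (Real.rpow_le_rpow hu0.le hur hβ.le)
      have h2 : t₀ ^ γ ≤ t ^ γ := Real.rpow_le_rpow ht₀.le ht hγ.le
      have k1 : (cα/2) * (t ^ γ * r ^ (-β)) ≤ (cα/2) * (t ^ γ * u ^ (-β)) :=
        mul_le_mul_of_nonneg_left (mul_le_mul_of_nonneg_left h1 htγ) (by positivity)
      have k2 : (cα/2) * (t₀ ^ γ * u ^ (-β)) ≤ (cα/2) * (t ^ γ * u ^ (-β)) :=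
        mul_le_mul_of_nonneg_left (mul_le_mul_of_nonneg_right h2 hub) (by positivity)
      rw [hc₁def, hbdef]
      linarith [k1, k2]
    -- combine the u-powers
    have hpow : (Real.sqrt r / Real.sqrt u) ^ ν * u ^ (-q) * u ^ (-κ) *
        Real.exp (-(b * u ^ (-β))) ≤ r ^ (ν/2) * K₁ := by
      have e1 : (Real.sqrt r / Real.sqrt u) ^ ν = r ^ (ν/2) * u ^ (-(ν/2)) := by
        rw [Real.sqrt_eq_rpow, Real.sqrt_eq_rpow,
          Real.div_rpow (Real.rpow_nonneg hr.le _) (Real.rpow_nonneg hu0.le _),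
          ← Real.rpow_mul hr.le, ← Real.rpow_mul hu0.le,
          div_eq_mul_inv, ← Real.rpow_neg hu0.le,
          show (1:ℝ)/2 * ν = ν/2 by ring]
      have e2 : r ^ (ν/2) * u ^ (-(ν/2)) * u ^ (-q) * u ^ (-κ) =
          r ^ (ν/2) * u ^ (-m) := by
        rw [mul_assoc, mul_assoc, ← Real.rpow_add hu0, ← Real.rpow_add hu0]
        congr 2
        rw [hmdef]; ring
      rw [e1, e2]
      have hKu : u ^ (-m) * Real.exp (-(b * u ^ (-β))) ≤ K₁ := by
        have h2 : u ^ (-m) = (u ^ (-β)) ^ (m/β) := by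
          rw [← Real.rpow_mul hu0.le]
          congr 1
          field_simp
        rw [h2]
        exact hK₁b _ (Real.rpow_nonneg hu0.le _)
      calc r ^ (ν/2) * u ^ (-m) * Real.exp (-(b * u ^ (-β)))
          = r ^ (ν/2) * (u ^ (-m) * Real.exp (-(b * u ^ (-β)))) := by ring
        _ ≤ r ^ (ν/2) * K₁ := mul_le_mul_of_nonneg_left hKu (by positivity)
    -- now the norm
    have hgnn : 0 ≤ Wu⁻¹ * Real.exp (-A * d^2 / u) * η t u * u ^ (-κ) := by
      have h1 : (0:ℝ) ≤ Wu⁻¹ := by positivity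
      have h2 : (0:ℝ) ≤ Real.exp (-A * d^2 / u) := (Real.exp_pos _).le
      have h4 : (0:ℝ) ≤ u ^ (-κ) := Real.rpow_nonneg hu0.le _
      exact mul_nonneg (mul_nonneg (mul_nonneg h1 h2) hηnn) h4
    rw [Real.norm_eq_abs, abs_of_nonneg hgnn]
    calc Wu⁻¹ * Real.exp (-A * d^2 / u) * η t u * u ^ (-κ)
        ≤ (C₀ * (Real.sqrt r / Real.sqrt u) ^ ν * W⁻¹) * Real.exp (-(A/r * d^2)) *
          (Cs * (t ^ (1/(2-α)) * u ^ (-q) *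
            (Real.exp (-(c₁ * t ^ γ)) * Real.exp (-(b * u ^ (-β)))))) * u ^ (-κ) := by
          have hη' : η t u ≤ Cs * (t ^ (1/(2-α)) * u ^ (-q) *
              (Real.exp (-(c₁ * t ^ γ)) * Real.exp (-(b * u ^ (-β))))) := by
            refine hη.trans ?_
            have h5 := mul_le_mul_of_nonneg_left hE3
              (by positivity : (0:ℝ) ≤ t ^ (1/(2-α)) * u ^ (-q))
            calc Cs * (t ^ (1/(2-α)) * u ^ (-q) * Real.exp (-cα * t ^ γ * u ^ (-β)))
                = Cs * ((t ^ (1/(2-α)) * u ^ (-q)) * Real.exp (-cα * t ^ γ * u ^ (-β))) := by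
                  ring
              _ ≤ Cs * ((t ^ (1/(2-α)) * u ^ (-q)) *
                  (Real.exp (-(c₁ * t ^ γ)) * Real.exp (-(b * u ^ (-β))))) :=
                  mul_le_mul_of_nonneg_left h5 hCs.le
              _ = Cs * (t ^ (1/(2-α)) * u ^ (-q) *
                  (Real.exp (-(c₁ * t ^ γ)) * Real.exp (-(b * u ^ (-β))))) := by ring
          gcongr <;> first
            | exact hWub
            | exact hE2
            | exact hη'
            | exact hηnn
            | exact mul_nonneg (mul_nonneg (by positivity) (Real.exp_pos _).le) hηnn
            | positivity
      _ = (C₀ * Cs * W⁻¹ * t ^ (1/(2-α)) * Real.exp (-(c₁ * t ^ γ)) *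
            Real.exp (-(A/r * d^2))) *
          ((Real.sqrt r / Real.sqrt u) ^ ν * u ^ (-q) * u ^ (-κ) *
            Real.exp (-(b * u ^ (-β)))) := by ring
      _ ≤ (C₀ * Cs * W⁻¹ * t ^ (1/(2-α)) * Real.exp (-(c₁ * t ^ γ)) *
            Real.exp (-(A/r * d^2))) * (r ^ (ν/2) * K₁) :=
          mul_le_mul_of_nonneg_left hpow (by positivity)
      _ = Dc := by rw [hDcdef]; ring
  -- integral bound
  have hIntBound : (∫ u in Set.Ioc (0:ℝ) r,
      ((μ (ball y (Real.sqrt u))).toReal)⁻¹ *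
        Real.exp (-A * d^2 / u) * η t u * u ^ (-κ)) ≤ Dc * r := by
    have hfin : volume (Set.Ioc (0:ℝ) r) < ⊤ := by
      rw [Real.volume_Ioc]; exact ENNReal.ofReal_lt_top
    have h := norm_setIntegral_le_of_norm_le_const hfin key
    rw [measureReal_def] at h
    have hvol : (volume (Set.Ioc (0:ℝ) r)).toReal = r := by
      rw [Real.volume_Ioc, ENNReal.toReal_ofReal (by linarith)]
      ring
    rw [hvol] at h
    calc (∫ u in Set.Ioc (0:ℝ) r,
        ((μ (ball y (Real.sqrt u))).toReal)⁻¹ *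
          Real.exp (-A * d^2 / u) * η t u * u ^ (-κ))
        ≤ ‖∫ u in Set.Ioc (0:ℝ) r,
          ((μ (ball y (Real.sqrt u))).toReal)⁻¹ *
            Real.exp (-A * d^2 / u) * η t u * u ^ (-κ)‖ := le_abs_self _
      _ ≤ Dc * r := h
  -- outer volume bound
  have hVx : (μ (ball x R)).toReal ≤ C₀^2 * 2 ^ (ν:ℝ) * (R ^ ν * r ^ (-(ν/2))) * W := by
    have h1 := hcomp x y R hRpos
    have h2 : (1 + dist x y / R) ^ ν ≤ 2 ^ (ν:ℝ) := by
      apply Real.rpow_le_rpow (by positivity) _ hν.le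
      rw [← hd]
      have : d / R ≤ 1 := by
        rw [div_le_one hRpos, hRdef]; linarith
      linarith
    have h3 := (hdoub y (Real.sqrt r) R hsr0 hsrR).2
    rw [div_le_iff₀ hWpos] at h3
    have h4 : (R / Real.sqrt r) ^ ν = R ^ ν * r ^ (-(ν/2)) := by
      rw [Real.sqrt_eq_rpow,
        Real.div_rpow hRpos.le (Real.rpow_nonneg hr.le _),
        ← Real.rpow_mul hr.le, div_eq_mul_inv, ← Real.rpow_neg hr.le,
        show (1:ℝ)/2 * ν = ν/2 by ring]
    calc (μ (ball x R)).toReal ≤ C₀ * (1 + dist x y / R) ^ ν * (μ (ball y R)).toReal := h1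
      _ ≤ C₀ * 2 ^ (ν:ℝ) * (μ (ball y R)).toReal := by
          have := volpos y R hRpos
          gcongr
      _ ≤ C₀ * 2 ^ (ν:ℝ) * (C₀ * (R / Real.sqrt r) ^ ν * W) := by
          gcongr <;> first | exact h3 | positivity
      _ = C₀^2 * 2 ^ (ν:ℝ) * (R ^ ν * r ^ (-(ν/2))) * W := by rw [h4]; ring
  -- R^p bound
  have hRp : R ^ p ≤ 2 ^ (p:ℝ) * (t ^ (p/α) + d ^ p) := by
    have h1 : R ≤ 2 * max (t ^ (1/α)) d := by
      rw [hRdef]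
      have := le_max_left (t ^ (1/α)) d
      have := le_max_right (t ^ (1/α)) d
      linarith
    have h2 : R ^ p ≤ (2 * max (t ^ (1/α)) d) ^ p :=
      Real.rpow_le_rpow hRpos.le h1 hp.le
    have h3 : (2 * max (t ^ (1/α)) d) ^ p = 2 ^ (p:ℝ) * (max (t ^ (1/α)) d) ^ p :=
      Real.mul_rpow (by norm_num) (le_max_of_le_left htα.le)
    have h4 : (max (t ^ (1/α)) d) ^ p ≤ t ^ (p/α) + d ^ p := by
      have ht' : (t ^ (1/α)) ^ p = t ^ (p/α) := by
        rw [← Real.rpow_mul ht0.le]; congr 1; field_simp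
      rcases le_total (t ^ (1/α)) d with h | h
      · rw [max_eq_right h]
        have : (0:ℝ) ≤ t ^ (p/α) := Real.rpow_nonneg ht0.le _
        linarith
      · rw [max_eq_left h, ht']
        have : (0:ℝ) ≤ d ^ p := Real.rpow_nonneg hd0 _
        linarith
    calc R ^ p ≤ (2 * max (t ^ (1/α)) d) ^ p := h2
      _ = 2 ^ (p:ℝ) * (max (t ^ (1/α)) d) ^ p := h3
      _ ≤ 2 ^ (p:ℝ) * (t ^ (p/α) + d ^ p) := by
          apply mul_le_mul_of_nonneg_left h4 (by positivity)
  -- the two decay estimates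
  have hG1 : Real.exp (-(A/r * d^2)) ≤ 1 :=
    Real.exp_le_one_iff.mpr (neg_nonpos.mpr (by positivity))
  have hF : t ^ (1/(2-α)) * Real.exp (-(c₁ * t ^ γ)) ≤ KC * t ^ (-N) := hKCb t ht1
  have hFnn : (0:ℝ) ≤ t ^ (1/(2-α)) * Real.exp (-(c₁ * t ^ γ)) := by positivity
  have htpF : t ^ (p/α) * (t ^ (1/(2-α)) * Real.exp (-(c₁ * t ^ γ))) ≤ KA * t ^ (-N) := by
    have h := hKAb t ht1
    rw [Real.rpow_add ht0, mul_assoc] at h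
    exact h
  have hdp : d ^ p * Real.exp (-(A/r * d^2)) ≤ r ^ (p/2) * KB := by
    have hs0 : (0:ℝ) ≤ d^2/r := by positivity
    have h := hKBb (d^2/r) hs0
    have e1 : d ^ p = r ^ (p/2) * (d^2/r) ^ (p/2) := by
      rw [← Real.mul_rpow hr.le hs0, show r * (d^2/r) = (d:ℝ)^2 by field_simp,
        show ((d:ℝ)^2 : ℝ) = d ^ (2:ℝ) from (Real.rpow_two d).symm,
        ← Real.rpow_mul hd0, show (2:ℝ)*(p/2) = p by ring]
    have e2 : Real.exp (-(A/r * d^2)) = Real.exp (-(A * (d^2/r))) := by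
      congr 1; ring
    rw [e1, e2, mul_assoc]
    exact mul_le_mul_of_nonneg_left h (by positivity)
  have hWW : W * W⁻¹ = 1 := mul_inv_cancel₀ hWpos.ne'
  have hrr : r ^ (-(ν/2)) * r ^ (ν/2) = 1 := by
    rw [← Real.rpow_add hr]; norm_num
  have hRR : R ^ ν * R ^ (α + 2*κ) = R ^ p := by
    rw [← Real.rpow_add hRpos]; congr 1; rw [hpdef]; ring
  calc (μ (ball x R)).toReal * R ^ (α + 2*κ) *
      (∫ u in Set.Ioc (0:ℝ) r,
        ((μ (ball y (Real.sqrt u))).toReal)⁻¹ *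
          Real.exp (-A * d^2 / u) * η t u * u ^ (-κ))
      ≤ (μ (ball x R)).toReal * R ^ (α + 2*κ) * (Dc * r) :=
        mul_le_mul_of_nonneg_left hIntBound (by positivity)
    _ ≤ (C₀^2 * 2 ^ (ν:ℝ) * (R ^ ν * r ^ (-(ν/2))) * W) * R ^ (α + 2*κ) * (Dc * r) :=
        mul_le_mul_of_nonneg_right
          (mul_le_mul_of_nonneg_right hVx (Real.rpow_nonneg hRpos.le _))
          (by positivity)
    _ = (C₀^3 * Cs * 2 ^ (ν:ℝ) * K₁ * r) *
        ((R ^ ν * R ^ (α + 2*κ)) * ((r ^ (-(ν/2)) * r ^ (ν/2)) * ((W * W⁻¹) *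
          ((t ^ (1/(2-α)) * Real.exp (-(c₁ * t ^ γ))) * Real.exp (-(A/r * d^2)))))) := by
        rw [hDcdef]; ring
    _ = (C₀^3 * Cs * 2 ^ (ν:ℝ) * K₁ * r) *
        (R ^ p * ((t ^ (1/(2-α)) * Real.exp (-(c₁ * t ^ γ))) * Real.exp (-(A/r * d^2)))) := by
        rw [hWW, hrr, hRR]; ring
    _ ≤ (C₀^3 * Cs * 2 ^ (ν:ℝ) * K₁ * r) *
        ((2 ^ (p:ℝ) * (t ^ (p/α) + d ^ p)) *
          ((t ^ (1/(2-α)) * Real.exp (-(c₁ * t ^ γ))) * Real.exp (-(A/r * d^2)))) := by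
        have hC2 : (0:ℝ) ≤ C₀^3 * Cs * 2 ^ (ν:ℝ) * K₁ * r := by positivity
        refine mul_le_mul_of_nonneg_left ?_ hC2
        exact mul_le_mul_of_nonneg_right hRp (by positivity)
    _ = (C₀^3 * Cs * 2 ^ (ν:ℝ) * K₁ * r) * 2 ^ (p:ℝ) *
        (t ^ (p/α) * (t ^ (1/(2-α)) * Real.exp (-(c₁ * t ^ γ))) * Real.exp (-(A/r * d^2)) +
         (d ^ p * Real.exp (-(A/r * d^2))) * (t ^ (1/(2-α)) * Real.exp (-(c₁ * t ^ γ)))) := by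
        ring
    _ ≤ (C₀^3 * Cs * 2 ^ (ν:ℝ) * K₁ * r) * 2 ^ (p:ℝ) *
        (KA * t ^ (-N) + (r ^ (p/2) * KB) * (KC * t ^ (-N))) := by
        refine mul_le_mul_of_nonneg_left ?_ (by positivity)
        have hterm1 : t ^ (p/α) * (t ^ (1/(2-α)) * Real.exp (-(c₁ * t ^ γ))) *
            Real.exp (-(A/r * d^2)) ≤ KA * t ^ (-N) := by
          calc t ^ (p/α) * (t ^ (1/(2-α)) * Real.exp (-(c₁ * t ^ γ))) *
              Real.exp (-(A/r * d^2))
              ≤ t ^ (p/α) * (t ^ (1/(2-α)) * Real.exp (-(c₁ * t ^ γ))) * 1 :=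
                mul_le_mul_of_nonneg_left hG1 (by positivity)
            _ = t ^ (p/α) * (t ^ (1/(2-α)) * Real.exp (-(c₁ * t ^ γ))) := mul_one _
            _ ≤ KA * t ^ (-N) := htpF
        have hterm2 : (d ^ p * Real.exp (-(A/r * d^2))) *
            (t ^ (1/(2-α)) * Real.exp (-(c₁ * t ^ γ))) ≤ (r ^ (p/2) * KB) * (KC * t ^ (-N)) := by
          have h1 : (d ^ p * Real.exp (-(A/r * d^2))) *
              (t ^ (1/(2-α)) * Real.exp (-(c₁ * t ^ γ))) ≤ (r ^ (p/2) * KB) *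
              (t ^ (1/(2-α)) * Real.exp (-(c₁ * t ^ γ))) :=
            mul_le_mul_of_nonneg_right hdp hFnn
          have h2 : (r ^ (p/2) * KB) * (t ^ (1/(2-α)) * Real.exp (-(c₁ * t ^ γ))) ≤
              (r ^ (p/2) * KB) * (KC * t ^ (-N)) :=
            mul_le_mul_of_nonneg_left hF (by positivity)
          exact h1.trans h2
        exact add_le_add hterm1 hterm2
    _ = (C₀^3 * Cs * 2 ^ (ν:ℝ) * K₁ * r) * (2 ^ (p:ℝ) * (KA + r ^ (p/2) * KB * KC)) *
        t ^ (-N) := by ring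
end

section
/- Let α ∈ (0,2). There exist constants 0 < c' ≤ C' (depending on α, the Li–Yau constants, the subordinator constants and the volume comparability constants) such that for all x, y ∈ M and t > 0: c' · t / ( V(x, t^{1/α} + d(x,y)) · (t^{1/α} + d(x,y))^{α} ) ≤ P_t^α(x,y) ≤ C' · t / ( V(x, t^{1/α} + d(x,y)) · (t^{1/α} + d(x,y))^{α} ). -/
open MeasureTheory Metric Real Filter

set_option maxHeartbeats 1000000

lemma aux_exp_poly (p b : ℝ) (hp : 0 ≤ p) (hb : 0 < b) :
    ∃ K : ℝ, 1 ≤ K ∧ ∀ s : ℝ, 1 ≤ s → s ^ p * Real.exp (-(b * s)) ≤ K := by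
  set n : ℕ := max 1 ⌈p⌉₊ with hn
  have hn1 : 1 ≤ n := le_max_left _ _
  have hpn : p ≤ (n : ℝ) := le_trans (Nat.le_ceil p) (by exact_mod_cast Nat.cast_le.2 (le_max_right 1 ⌈p⌉₊))
  refine ⟨max 1 (((n : ℝ)/b)^n), le_max_left _ _, fun s hs => ?_⟩
  have hs0 : 0 < s := lt_of_lt_of_le one_pos hs
  have h1 : s ^ p ≤ s ^ (n : ℝ) := Real.rpow_le_rpow_of_exponent_le hs hpn
  rw [Real.rpow_natCast] at h1
  have h2 : s ≤ ((n : ℝ)/b) * Real.exp (b * s / n) := by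
    have hne : (0:ℝ) < (n:ℝ) := by exact_mod_cast Nat.pos_of_ne_zero (by omega)
    have hbs : b * s / n ≤ Real.exp (b * s / n) := by
      nlinarith [Real.add_one_le_exp (b * s / n), Real.exp_pos (b*s/n), mul_pos hb hs0]
    calc s = ((n:ℝ)/b) * (b * s / n) := by field_simp
    _ ≤ ((n:ℝ)/b) * Real.exp (b * s / n) := by
        apply mul_le_mul_of_nonneg_left hbs (by positivity)
  have h3 : s ^ n ≤ (((n : ℝ)/b))^n * Real.exp (b * s) := by
    calc s ^ n ≤ (((n : ℝ)/b) * Real.exp (b * s / n))^n :=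
          pow_le_pow_left₀ hs0.le h2 n
    _ = (((n : ℝ)/b))^n * (Real.exp (b * s / n))^n := mul_pow _ _ _
    _ = (((n : ℝ)/b))^n * Real.exp (b * s) := by
        rw [← Real.exp_nat_mul]
        congr 1
        field_simp
  calc s ^ p * Real.exp (-(b * s)) ≤ s ^ n * Real.exp (-(b * s)) := by
        apply mul_le_mul_of_nonneg_right h1 (Real.exp_pos _).le
  _ ≤ ((((n : ℝ)/b))^n * Real.exp (b * s)) * Real.exp (-(b * s)) := by
        apply mul_le_mul_of_nonneg_right h3 (Real.exp_pos _).le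
  _ = (((n : ℝ)/b))^n := by rw [mul_assoc, ← Real.exp_add]; simp
  _ ≤ max 1 (((n : ℝ)/b)^n) := le_max_right _ _

lemma aux_sq1 (a b : ℝ) : (a+b)^2 ≤ 2*a^2 + 2*b^2 := by nlinarith [sq_nonneg (a-b)]

lemma aux_sq2 (a b : ℝ) (ha : 0 ≤ a) (hb : 0 ≤ b) : a^2 ≤ (a+b)^2 := by nlinarith

lemma aux_exp_poly' (q b : ℝ) (hq : 0 ≤ q) (hb : 0 < b) :
    ∃ K : ℝ, 1 ≤ K ∧ ∀ s : ℝ, 0 ≤ s → (1+s) ^ q * Real.exp (-(b * s)) ≤ K := by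
  obtain ⟨K, hK1, hK⟩ := aux_exp_poly q b hq hb
  refine ⟨max 1 (Real.exp b * K), le_max_left _ _, fun s hs => ?_⟩
  have h1 : (1+s) ^ q * Real.exp (-(b * (1+s))) ≤ K := hK (1+s) (by linarith)
  have : (1+s) ^ q * Real.exp (-(b * s)) = Real.exp b * ((1+s) ^ q * Real.exp (-(b * (1+s)))) := by
    rw [show (-(b * s)) = b + (-(b*(1+s))) by ring, Real.exp_add]; ring
  rw [this]
  calc Real.exp b * ((1+s) ^ q * Real.exp (-(b * (1+s)))) ≤ Real.exp b * K :=
        mul_le_mul_of_nonneg_left h1 (Real.exp_pos b).le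
  _ ≤ _ := le_max_right _ _

lemma aux_exp_poly_beta (q β b : ℝ) (hq : 0 ≤ q) (hβ : 0 < β) (hb : 0 < b) :
    ∃ K : ℝ, 1 ≤ K ∧ ∀ w : ℝ, 1 ≤ w → w ^ q * Real.exp (-(b * w ^ β)) ≤ K := by
  obtain ⟨K, hK1, hK⟩ := aux_exp_poly (q/β) b (by positivity) hb
  refine ⟨K, hK1, fun w hw => ?_⟩
  have hw0 : 0 < w := lt_of_lt_of_le one_pos hw
  have hs : 1 ≤ w ^ β := Real.one_le_rpow hw hβ.le
  have h1 : (w ^ β) ^ (q/β) = w ^ q := by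
    rw [← Real.rpow_mul hw0.le]
    congr 1
    field_simp
  have := hK (w ^ β) hs
  rwa [h1] at this

/-- The fractional heat kernel: the kernel subordinated to the heat kernel `h` via the
stable subordinator densities `η`: `P_t^α(x,y) = ∫₀^∞ h_u(x,y) η_t(u) du`. -/
noncomputable def Pker {M : Type*} (h : ℝ → M → M → ℝ) (η : ℝ → ℝ → ℝ)
    (t : ℝ) (x y : M) : ℝ :=
  ∫ u in Set.Ioi (0:ℝ), h u x y * η t u

/-- two-sided bound for the fractional heat kernel
`P_t^α(x,y) ≍ t / ( V(x, t^{1/α}+d(x,y)) (t^{1/α}+d(x,y))^{α} )`. -/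
theorem stmt_10
    {M : Type*} [MetricSpace M] [MeasurableSpace M] [BorelSpace M]
    (μ : Measure M)
    (hVpos : ∀ (x : M) (r : ℝ), 0 < r → 0 < μ (ball x r))
    (hVfin : ∀ (x : M) (r : ℝ), 0 < r → μ (ball x r) < ⊤)
    -- volume comparability
    (ν ν' c₀ C₀ : ℝ) (hν' : 0 < ν') (hνν : ν' ≤ ν) (hc₀ : 0 < c₀) (hc₀C₀ : c₀ ≤ C₀)
    (hdoub : ∀ (x : M) (r R : ℝ), 0 < r → r ≤ R →
        c₀ * (R/r) ^ ν' ≤ (μ (ball x R)).toReal / (μ (ball x r)).toReal ∧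
        (μ (ball x R)).toReal / (μ (ball x r)).toReal ≤ C₀ * (R/r) ^ ν)
    (hcomp : ∀ (x y : M) (r : ℝ), 0 < r →
        (μ (ball x r)).toReal ≤ C₀ * (1 + dist x y / r) ^ ν * (μ (ball y r)).toReal)
    -- heat kernel with Li–Yau two-sided Gaussian estimate
    (h : ℝ → M → M → ℝ)
    (hhmeas : Measurable (fun p : ℝ × M × M => h p.1 p.2.1 p.2.2))
    (hhsym : ∀ u : ℝ, 0 < u → ∀ x y : M, h u x y = h u y x)
    (c₁ C₁ c₂ C₂ : ℝ) (hc₁ : 0 < c₁) (hC₁ : 0 < C₁) (hc₂ : 0 < c₂) (hC₂ : 0 < C₂)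
    (hLY : ∀ u : ℝ, 0 < u → ∀ x y : M,
        c₁ / (μ (ball y (Real.sqrt u))).toReal * Real.exp (-C₁ * (dist x y)^2 / u) ≤ h u x y ∧
        h u x y ≤ C₂ / (μ (ball y (Real.sqrt u))).toReal * Real.exp (-c₂ * (dist x y)^2 / u))
    -- stable subordinator densities with two-sided bounds
    (α : ℝ) (hα0 : 0 < α) (hα2 : α < 2)
    (η : ℝ → ℝ → ℝ)
    (hηmeas : Measurable (fun p : ℝ × ℝ => η p.1 p.2))
    (hηpos : ∀ t : ℝ, 0 < t → ∀ u : ℝ, 0 < u → 0 < η t u)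
    (cs Cs : ℝ) (hcs : 0 < cs) (hcsCs : cs ≤ Cs)
    (hηbd : ∀ t : ℝ, 0 < t → ∀ u : ℝ, 0 < u →
        (u ≤ t ^ (2/α) →
          cs ≤ η t u / (t ^ (1/(2-α)) * u ^ (-((4-α)/(4-2*α))) *
              Real.exp (-(((2-α)/2) * (α/2) ^ (α/(2-α))) * t ^ (2/(2-α)) * u ^ (-(α/(2-α))))) ∧
          η t u / (t ^ (1/(2-α)) * u ^ (-((4-α)/(4-2*α))) *
              Real.exp (-(((2-α)/2) * (α/2) ^ (α/(2-α))) * t ^ (2/(2-α)) * u ^ (-(α/(2-α))))) ≤ Cs) ∧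
        (t ^ (2/α) < u →
          cs ≤ η t u / (t * u ^ (-1-α/2)) ∧ η t u / (t * u ^ (-1-α/2)) ≤ Cs)) :
    ∃ c' C' : ℝ, 0 < c' ∧ c' ≤ C' ∧ ∀ (x y : M) (t : ℝ), 0 < t →
      c' * (t / ((μ (ball x (t ^ (1/α) + dist x y))).toReal *
            (t ^ (1/α) + dist x y) ^ α))
        ≤ Pker h η t x y ∧
      Pker h η t x y ≤
        C' * (t / ((μ (ball x (t ^ (1/α) + dist x y))).toReal *
            (t ^ (1/α) + dist x y) ^ α)) := by
  rcases isEmpty_or_nonempty M with hM | hM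
  · exact ⟨1, 1, one_pos, le_rfl, fun x => (IsEmpty.false x).elim⟩
  have h2α : (0:ℝ) < 2 - α := by linarith
  have hν : 0 < ν := lt_of_lt_of_le hν' hνν
  set β : ℝ := α / (2 - α) with hβdef
  have hβ : 0 < β := by positivity
  set cα : ℝ := ((2 - α)/2) * (α/2) ^ β with hcαdef
  have hcα : 0 < cα := by positivity
  set γ : ℝ := α * (α - 1) / (2 * (2 - α)) with hγdef
  obtain ⟨Ks, hKs1, hKs⟩ := aux_exp_poly' (ν/2) (c₂/2) (by positivity) (by positivity)
  obtain ⟨Kh, hKh1, hKh⟩ := aux_exp_poly' (ν/2 + α) c₂ (by positivity) hc₂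
  obtain ⟨Kw, hKw1, hKw⟩ := aux_exp_poly_beta (ν/2 + max γ 0) β (cα/2)
    (by positivity) hβ (by positivity)
  obtain ⟨Kg1, hKg11, hKg1⟩ := aux_exp_poly_beta α β (cα/4) hα0.le hβ (by positivity)
  obtain ⟨Kg2, hKg21, hKg2⟩ := aux_exp_poly α (c₂/2) hα0.le (by positivity)
  obtain ⟨z₀⟩ := hM
  have hVr : ∀ (z : M) (r : ℝ), 0 < r → 0 < (μ (ball z r)).toReal := fun z r hr =>
    ENNReal.toReal_pos (hVpos z r hr).ne' (hVfin z r hr).ne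
  have hC₀1 : 1 ≤ C₀ := by
    have h1 := (hdoub z₀ 1 1 one_pos le_rfl).2
    rw [div_self (hVr z₀ 1 one_pos).ne', div_self one_ne_zero, Real.one_rpow, mul_one] at h1
    exact h1
  have hC₀ : 0 < C₀ := lt_of_lt_of_le hc₀ hc₀C₀
  set KA : ℝ := C₂*C₀*Cs * 3^(ν/2) * Kw * Ks * (max Kg1 Kg2) * 4^α with hKAdef
  set KB : ℝ := C₂*C₀*Cs * 3^(ν/2) * (max Kh (2^(ν/2))) * 4^α with hKBdef
  set Kp : ℝ := max (max KA KB) (C₂*Cs) with hKpdef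
  have hCs : 0 < Cs := lt_of_lt_of_le hcs hcsCs
  have hKA : 0 < KA := by positivity
  have hKB : 0 < KB := by positivity
  have hKp : 0 < Kp := lt_of_lt_of_le hKA (le_trans (le_max_left _ _) (le_max_left _ _))
  set Cu : ℝ := Kp * (4/α) * (C₀ * 2^ν) with hCudef
  set cl : ℝ := (c₁ * Real.exp (-C₁) * cs * 2^(-1-α/2)) / ((C₀*2^ν)*(C₀*2^ν)) with hcldef
  have hCu : 0 < Cu := by positivity
  have hcl : 0 < cl := by positivity
  refine ⟨min cl Cu, max cl Cu, lt_min hcl hCu,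
    le_trans (min_le_left _ _) (le_max_left _ _), fun x y t ht => ?_⟩
  -- per-point setup
  set d : ℝ := dist x y with hddef
  have hd0 : (0:ℝ) ≤ d := dist_nonneg
  set ρ : ℝ := t ^ (1/α) + d with hρdef
  have htα : 0 < t ^ (1/α) := Real.rpow_pos_of_pos ht _
  have hρ : 0 < ρ := by positivity
  have hdρ : d ≤ ρ := by rw [hρdef]; linarith
  set T : ℝ := t ^ (2/α) with hTdef
  have hT : 0 < T := Real.rpow_pos_of_pos ht _
  have hT2 : T = (t ^ (1/α))^2 := by
    rw [hTdef, ← Real.rpow_natCast (t ^ (1/α)) 2, ← Real.rpow_mul ht.le]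
    congr 1
    push_cast
    ring
  have hTρ : T ≤ ρ^2 := by rw [hT2, hρdef]; exact aux_sq2 _ _ htα.le hd0
  have hρT : ρ^2 ≤ 2*T + 2*d^2 := by rw [hT2, hρdef]; exact aux_sq1 _ _
  have hVmono : ∀ (z : M) (r R : ℝ), 0 < r → r ≤ R →
      (μ (ball z r)).toReal ≤ (μ (ball z R)).toReal := fun z r R hr hrR =>
    ENNReal.toReal_mono (hVfin z R (lt_of_lt_of_le hr hrR)).ne
      (measure_mono (ball_subset_ball hrR))
  set Vρ : ℝ := (μ (ball y ρ)).toReal with hVρdef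
  set Vx : ℝ := (μ (ball x ρ)).toReal with hVxdef
  have hVρ0 : 0 < Vρ := hVr y ρ hρ
  have hVx0 : 0 < Vx := hVr x ρ hρ
  have hVdoub : ∀ (z : M) (r R : ℝ), 0 < r → r ≤ R →
      (μ (ball z R)).toReal ≤ C₀ * (R/r)^ν * (μ (ball z r)).toReal := by
    intro z r R hr hrR
    have h1 := (hdoub z r R hr hrR).2
    rw [div_le_iff₀ (hVr z r hr)] at h1
    exact h1.trans_eq (by ring)
  have hd1 : d / ρ ≤ 1 := (div_le_one hρ).2 hdρ
  have hcompxy : Vx ≤ C₀ * 2^ν * Vρ := by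
    have h1 := hcomp x y ρ hρ
    rw [← hddef] at h1
    have h2 : (1 + d / ρ) ^ ν ≤ 2 ^ ν :=
      Real.rpow_le_rpow (by positivity) (by linarith) hν.le
    calc Vx ≤ C₀ * (1 + d / ρ) ^ ν * Vρ := h1
    _ ≤ C₀ * 2^ν * Vρ := by
        apply mul_le_mul_of_nonneg_right (mul_le_mul_of_nonneg_left h2 hC₀.le) hVρ0.le
  have hcompyx : Vρ ≤ C₀ * 2^ν * Vx := by
    have h1 := hcomp y x ρ hρ
    rw [dist_comm y x, ← hddef] at h1
    have h2 : (1 + d / ρ) ^ ν ≤ 2 ^ ν :=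
      Real.rpow_le_rpow (by positivity) (by linarith) hν.le
    calc Vρ ≤ C₀ * (1 + d / ρ) ^ ν * Vx := h1
    _ ≤ C₀ * 2^ν * Vx := by
        apply mul_le_mul_of_nonneg_right (mul_le_mul_of_nonneg_left h2 hC₀.le) hVx0.le
  have hP1 : ∀ u : ℝ, 0 < u →
      Vρ ≤ C₀ * (1 + ρ^2/u) ^ (ν/2) * (μ (ball y (Real.sqrt u))).toReal := by
    intro u hu
    have hsu : 0 < Real.sqrt u := Real.sqrt_pos.2 hu
    have hWpos : (1:ℝ) ≤ (1 + ρ^2/u) ^ (ν/2) := by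
      apply Real.one_le_rpow ?_ (by positivity)
      have : (0:ℝ) ≤ ρ^2/u := by positivity
      linarith
    rcases le_or_gt ρ (Real.sqrt u) with hc | hc
    · have h1 : Vρ ≤ (μ (ball y (Real.sqrt u))).toReal := hVmono y ρ _ hρ hc
      have h2 : (1:ℝ) ≤ C₀ * (1 + ρ^2/u) ^ (ν/2) :=
        le_trans hC₀1 (le_mul_of_one_le_right hC₀.le hWpos)
      calc Vρ ≤ (μ (ball y (Real.sqrt u))).toReal := h1
      _ = 1 * (μ (ball y (Real.sqrt u))).toReal := (one_mul _).symm
      _ ≤ _ := mul_le_mul_of_nonneg_right h2 ENNReal.toReal_nonneg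
    · have h1 := hVdoub y (Real.sqrt u) ρ hsu hc.le
      have h2 : (ρ / Real.sqrt u) ^ ν ≤ (1 + ρ^2/u) ^ (ν/2) := by
        have e1 : (ρ / Real.sqrt u) ^ ν = ((ρ/Real.sqrt u)^2) ^ (ν/2) := by
          rw [← Real.rpow_natCast (ρ/Real.sqrt u) 2, ← Real.rpow_mul (by positivity)]
          congr 1
          push_cast
          ring
        rw [e1]
        apply Real.rpow_le_rpow (by positivity) ?_ (by positivity)
        rw [div_pow, Real.sq_sqrt hu.le]
        have : 0 ≤ ρ^2/u := by positivity
        linarith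
      calc Vρ ≤ C₀ * (ρ/Real.sqrt u)^ν * (μ (ball y (Real.sqrt u))).toReal := h1
      _ ≤ _ := by
          apply mul_le_mul_of_nonneg_right
            (mul_le_mul_of_nonneg_left h2 hC₀.le) ENNReal.toReal_nonneg
  have hh0 : ∀ u : ℝ, 0 < u → 0 ≤ h u x y := by
    intro u hu
    refine le_trans ?_ (hLY u hu x y).1
    positivity
  have hg0 : ∀ u : ℝ, 0 < u → 0 ≤ h u x y * η t u := fun u hu =>
    mul_nonneg (hh0 u hu) (hηpos t ht u hu).le
  -- the dominating function
  set F : ℝ → ℝ := fun u => if u ≤ ρ^2 then ρ^(-(2*α)) * u^(α/2-1) else u^(-1-α/2) with hFdef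
  have hρ2 : (0:ℝ) < ρ^2 := by positivity
  -- MAIN pointwise upper bound
  have hKw0 : (0:ℝ) ≤ Kw := le_trans zero_le_one hKw1
  have hKs0 : (0:ℝ) ≤ Ks := le_trans zero_le_one hKs1
  have hKg10 : (0:ℝ) ≤ Kg1 := le_trans zero_le_one hKg11
  have hKg20 : (0:ℝ) ≤ Kg2 := le_trans zero_le_one hKg21
  have hKh0 : (0:ℝ) ≤ Kh := le_trans zero_le_one hKh1
  have hKgmax0 : (0:ℝ) ≤ max Kg1 Kg2 := le_trans hKg10 (le_max_left _ _)
  have hKhmax0 : (0:ℝ) ≤ max Kh ((2:ℝ)^(ν/2)) := le_trans hKh0 (le_max_left _ _)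
  have hKAKp : KA ≤ Kp := le_trans (le_max_left KA KB) (le_max_left _ _)
  have hKBKp : KB ≤ Kp := le_trans (le_max_right KA KB) (le_max_left _ _)
  have h42 : (4:ℝ) - 2*α ≠ 0 := by
    have : (0:ℝ) < 4 - 2*α := by linarith
    exact this.ne'
  have h2αne : (2:ℝ) - α ≠ 0 := h2α.ne'
  have hFub : ∀ u ∈ Set.Ioi (0:ℝ), h u x y * η t u ≤ (Kp * t / Vρ) * F u := by
    intro u hu
    simp only [Set.mem_Ioi] at hu
    simp only [hFdef]
    have hVyu0 : 0 < (μ (ball y (Real.sqrt u))).toReal := hVr y _ (Real.sqrt_pos.2 hu)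
    have hhub := (hLY u hu x y).2
    rw [← hddef] at hhub
    rcases le_or_gt u (ρ^2) with hup | hup
    · rw [if_pos hup]
      -- common facts for u ≤ ρ²
      have hm0 : 0 < max (d^2) T := lt_of_lt_of_le hT (le_max_right _ _)
      have hm4 : ρ^2 ≤ 4*max (d^2) T := by
        have h1 := le_max_left (d^2) T
        have h2 := le_max_right (d^2) T
        linarith [hρT]
      have humb : (u/max (d^2) T)^α ≤ 4^α * (u^α * ρ^(-(2*α))) := by
        have h1 : u / max (d^2) T ≤ 4*u/ρ^2 := by
          rw [div_le_div_iff₀ hm0 hρ2]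
          calc u * ρ^2 ≤ u * (4*max (d^2) T) := mul_le_mul_of_nonneg_left hm4 hu.le
          _ = 4*u*max (d^2) T := by ring
        calc (u / max (d^2) T)^α ≤ (4*u/ρ^2)^α :=
            Real.rpow_le_rpow (by positivity) h1 hα0.le
        _ = 4^α * (u^α * ρ^(-(2*α))) := by
            rw [Real.div_rpow (by positivity) (by positivity),
              Real.mul_rpow (by norm_num) hu.le, ← Real.rpow_two,
              ← Real.rpow_mul hρ.le, div_eq_mul_inv, ← Real.rpow_neg hρ.le]
            ring
      have hmerge : u^(-1-α/2) * u^α = u^(α/2-1) := by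
        rw [← Real.rpow_add hu]; congr 1; ring
      have hhb : h u x y ≤ C₂*C₀*(1+ρ^2/u)^(ν/2)/Vρ * Real.exp (-c₂*d^2/u) := by
        refine le_trans hhub (mul_le_mul_of_nonneg_right ?_ (Real.exp_pos _).le)
        rw [div_le_div_iff₀ hVyu0 hVρ0]
        calc C₂ * Vρ ≤ C₂ * (C₀ * (1+ρ^2/u)^(ν/2) * (μ (ball y (Real.sqrt u))).toReal) :=
              mul_le_mul_of_nonneg_left (hP1 u hu) hC₂.le
        _ = C₂*C₀*(1+ρ^2/u)^(ν/2) * (μ (ball y (Real.sqrt u))).toReal := by ring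
      rcases le_or_gt u T with huT | huT
      · -- case u ≤ T : subordinator小 time regime
        have hη1 := ((hηbd t ht u hu).1 huT).2
        rw [div_le_iff₀ (by positivity)] at hη1
        set w : ℝ := T/u with hwdef
        have hw1 : 1 ≤ w := (one_le_div hu).2 huT
        have hw0 : 0 < w := lt_of_lt_of_le one_pos hw1
        have hwβ : w^β = t^(2/(2-α)) * u^(-(α/(2-α))) := by
          rw [hwdef, Real.div_rpow hT.le hu.le, hTdef, ← Real.rpow_mul ht.le,
            Real.rpow_neg hu.le, div_eq_mul_inv, hβdef]
          congr 2
          field_simp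
        have hwγ : w^γ = t^((α-1)/(2-α)) * u^(-γ) := by
          rw [hwdef, Real.div_rpow hT.le hu.le, hTdef, ← Real.rpow_mul ht.le,
            Real.rpow_neg hu.le, div_eq_mul_inv]
          congr 2
          rw [hγdef]
          field_simp
        have hAid : t^(1/(2-α)) * u^(-((4-α)/(4-2*α))) = (t * u^(-1-α/2)) * w^γ := by
          have ht1 : t^(1/(2-α)) = t^(1:ℝ) * t^((α-1)/(2-α)) := by
            rw [← Real.rpow_add ht]; congr 1; field_simp; norm_num
          have hu1 : u^(-((4-α)/(4-2*α))) = u^(-1-α/2) * u^(-γ) := by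
            rw [← Real.rpow_add hu]; congr 1; rw [hγdef, show (4:ℝ)-2*α = 2*(2-α) by ring]; field_simp; ring
          rw [ht1, hu1, hwγ, Real.rpow_one]
          ring
        have hEsplit : Real.exp (-(((2-α)/2) * (α/2)^(α/(2-α))) * t^(2/(2-α)) * u^(-(α/(2-α)))) =
            Real.exp (-(cα/2 * w^β)) * (Real.exp (-(cα/4 * w^β)) * Real.exp (-(cα/4 * w^β))) := by
          rw [← Real.exp_add, ← Real.exp_add]
          congr 1
          rw [hwβ, hcαdef, hβdef]
          ring
        have hc₂split : Real.exp (-c₂*d^2/u) =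
            Real.exp (-(c₂/2*(d^2/u))) * Real.exp (-(c₂/2*(d^2/u))) := by
          rw [← Real.exp_add]; congr 1; ring
        have hgain : Real.exp (-(c₂/2*(d^2/u))) * Real.exp (-(cα/4 * w^β)) ≤
            (max Kg1 Kg2) * (u/max (d^2) T)^α := by
          rcases le_or_gt (d^2) T with hcase | hcase
          · have hmeq : max (d^2) T = T := max_eq_right hcase
            have hinv : (u/max (d^2) T)^α = (w^α)⁻¹ := by
              rw [hmeq, show u/T = w⁻¹ by rw [hwdef, inv_div], Real.inv_rpow hw0.le]
            have h1 := hKg1 w hw1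
            have h2 : Real.exp (-(c₂/2*(d^2/u))) ≤ 1 := by
              rw [Real.exp_le_one_iff]
              have : (0:ℝ) ≤ c₂/2*(d^2/u) := by positivity
              linarith
            rw [hinv]
            have hwα : 0 < w^α := Real.rpow_pos_of_pos hw0 α
            calc Real.exp (-(c₂/2*(d^2/u))) * Real.exp (-(cα/4 * w^β))
                ≤ 1 * Real.exp (-(cα/4 * w^β)) :=
                  mul_le_mul_of_nonneg_right h2 (Real.exp_pos _).le
            _ = Real.exp (-(cα/4 * w^β)) := one_mul _
            _ ≤ Kg1 * (w^α)⁻¹ := by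
                rw [← div_eq_mul_inv, le_div_iff₀ hwα]
                calc Real.exp (-(cα/4 * w^β)) * w^α = w^α * Real.exp (-(cα/4*w^β)) :=
                    mul_comm _ _
                _ ≤ Kg1 := h1
            _ ≤ (max Kg1 Kg2) * (w^α)⁻¹ :=
                mul_le_mul_of_nonneg_right (le_max_left _ _) (by positivity)
          · have hmeq : max (d^2) T = d^2 := max_eq_left hcase.le
            have hd2 : 0 < d^2 := lt_trans hT hcase
            have hs1 : 1 ≤ d^2/u := (one_le_div hu).2 (le_trans huT hcase.le)
            have h1 := hKg2 (d^2/u) hs1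
            have h2 : Real.exp (-(cα/4*w^β)) ≤ 1 := by
              rw [Real.exp_le_one_iff]
              have : (0:ℝ) ≤ cα/4*w^β := by positivity
              linarith
            have hinv : (u/max (d^2) T)^α = ((d^2/u)^α)⁻¹ := by
              rw [hmeq, show u/d^2 = (d^2/u)⁻¹ from (inv_div _ _).symm,
                Real.inv_rpow (by positivity)]
            rw [hinv]
            have hsα : 0 < (d^2/u)^α := Real.rpow_pos_of_pos (by positivity) α
            calc Real.exp (-(c₂/2*(d^2/u))) * Real.exp (-(cα/4 * w^β))
                ≤ Real.exp (-(c₂/2*(d^2/u))) * 1 :=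
                  mul_le_mul_of_nonneg_left h2 (Real.exp_pos _).le
            _ = Real.exp (-(c₂/2*(d^2/u))) := mul_one _
            _ ≤ Kg2 * ((d^2/u)^α)⁻¹ := by
                rw [← div_eq_mul_inv, le_div_iff₀ hsα]
                calc Real.exp (-(c₂/2*(d^2/u))) * (d^2/u)^α
                    = (d^2/u)^α * Real.exp (-(c₂/2*(d^2/u))) := mul_comm _ _
                _ ≤ Kg2 := h1
            _ ≤ (max Kg1 Kg2) * ((d^2/u)^α)⁻¹ :=
                mul_le_mul_of_nonneg_right (le_max_right _ _) (by positivity)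
        have hWs : (1+ρ^2/u)^(ν/2) ≤ 3^(ν/2) * (w^(ν/2) * (1+d^2/u)^(ν/2)) := by
          have h2 : ρ^2/u ≤ (2*T+2*d^2)/u := by gcongr
          have h3 : (2*T+2*d^2)/u = 2*w + 2*(d^2/u) := by rw [hwdef]; ring
          rw [h3] at h2
          have h4 : (0:ℝ) ≤ d^2/u := by positivity
          have h7 : d^2/u ≤ w*(d^2/u) := le_mul_of_one_le_left h4 hw1
          have h6 : 1+ρ^2/u ≤ 3*(w*(1+d^2/u)) := by
            have e : 3*(w*(1+d^2/u)) = 3*w + 3*(w*(d^2/u)) := by ring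
            rw [e]
            linarith
          calc (1+ρ^2/u)^(ν/2) ≤ (3*(w*(1+d^2/u)))^(ν/2) :=
              Real.rpow_le_rpow (by positivity) h6 (by positivity)
          _ = 3^(ν/2) * (w^(ν/2) * (1+d^2/u)^(ν/2)) := by
              rw [Real.mul_rpow (by norm_num) (by positivity),
                Real.mul_rpow (by positivity) (by positivity)]
        have hwfact : w^(ν/2) * w^(max γ 0) * Real.exp (-(cα/2*w^β)) ≤ Kw := by
          rw [← Real.rpow_add hw0]
          exact hKw w hw1
        have hwγmax : w^γ ≤ w^(max γ 0) :=
          Real.rpow_le_rpow_of_exponent_le hw1 (le_max_left _ _)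
        have hsfact : (1+d^2/u)^(ν/2) * Real.exp (-(c₂/2*(d^2/u))) ≤ Ks :=
          hKs (d^2/u) (by positivity)
        calc h u x y * η t u
            ≤ (C₂*C₀*(1+ρ^2/u)^(ν/2)/Vρ * Real.exp (-c₂*d^2/u)) *
              (Cs * (t^(1/(2-α)) * u^(-((4-α)/(4-2*α))) *
                Real.exp (-(((2-α)/2) * (α/2)^(α/(2-α))) * t^(2/(2-α)) * u^(-(α/(2-α)))))) :=
              mul_le_mul hhb hη1 (hηpos t ht u hu).le (by positivity)
        _ = (C₂*C₀*Cs) * (t/Vρ) * u^(-1-α/2) *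
            ((1+ρ^2/u)^(ν/2) * (w^γ * Real.exp (-(cα/2*w^β)) * Real.exp (-(cα/4*w^β))) *
             (Real.exp (-(c₂/2*(d^2/u))) * Real.exp (-(c₂/2*(d^2/u))) * Real.exp (-(cα/4*w^β)))) := by
            rw [hc₂split, hEsplit, hAid]
            ring
        _ ≤ (C₂*C₀*Cs) * (t/Vρ) * u^(-1-α/2) *
            ((3^(ν/2) * (w^(ν/2) * (1+d^2/u)^(ν/2))) *
             (w^(max γ 0) * Real.exp (-(cα/2*w^β)) * Real.exp (-(cα/4*w^β))) *
             (Real.exp (-(c₂/2*(d^2/u))) * Real.exp (-(c₂/2*(d^2/u))) * Real.exp (-(cα/4*w^β)))) := by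
            apply mul_le_mul_of_nonneg_left ?_ (by positivity)
            apply mul_le_mul_of_nonneg_right ?_ (by positivity)
            exact mul_le_mul hWs
              (mul_le_mul_of_nonneg_right
                (mul_le_mul_of_nonneg_right hwγmax (Real.exp_pos _).le) (Real.exp_pos _).le)
              (by positivity) (by positivity)
        _ = (C₂*C₀*Cs) * (t/Vρ) * u^(-1-α/2) * 3^(ν/2) *
            ((w^(ν/2) * w^(max γ 0) * Real.exp (-(cα/2*w^β))) *
             ((1+d^2/u)^(ν/2) * Real.exp (-(c₂/2*(d^2/u)))) *
             (Real.exp (-(c₂/2*(d^2/u))) * Real.exp (-(cα/4*w^β))) *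
             Real.exp (-(cα/4*w^β))) := by ring
        _ ≤ (C₂*C₀*Cs) * (t/Vρ) * u^(-1-α/2) * 3^(ν/2) *
            (Kw * Ks * ((max Kg1 Kg2) * (u/max (d^2) T)^α) * 1) := by
            apply mul_le_mul_of_nonneg_left ?_ (by positivity)
            apply mul_le_mul ?_ ?_ (Real.exp_pos _).le (by positivity)
            · apply mul_le_mul ?_ hgain (by positivity) (by positivity)
              exact mul_le_mul hwfact hsfact (by positivity) hKw0
            · rw [Real.exp_le_one_iff]
              have : (0:ℝ) ≤ cα/4*w^β := by positivity
              linarith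
        _ ≤ (C₂*C₀*Cs) * (t/Vρ) * u^(-1-α/2) * 3^(ν/2) *
            (Kw * Ks * ((max Kg1 Kg2) * (4^α * (u^α * ρ^(-(2*α))))) * 1) := by
            apply mul_le_mul_of_nonneg_left ?_ (by positivity)
            apply mul_le_mul_of_nonneg_right ?_ zero_le_one
            exact mul_le_mul_of_nonneg_left
              (mul_le_mul_of_nonneg_left humb hKgmax0) (by positivity)
        _ = KA * (t/Vρ) * (ρ^(-(2*α)) * (u^(-1-α/2) * u^α)) := by rw [hKAdef]; ring
        _ = KA * (t/Vρ) * (ρ^(-(2*α)) * u^(α/2-1)) := by rw [hmerge]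
        _ ≤ Kp * (t/Vρ) * (ρ^(-(2*α)) * u^(α/2-1)) := by
            apply mul_le_mul_of_nonneg_right
              (mul_le_mul_of_nonneg_right hKAKp (by positivity)) (by positivity)
        _ = Kp * t / Vρ * (ρ^(-(2*α)) * u^(α/2-1)) := by ring
      · -- case T < u ≤ ρ²
        have hη2 := ((hηbd t ht u hu).2 huT).2
        rw [div_le_iff₀ (by positivity)] at hη2
        have hgain : (1+ρ^2/u)^(ν/2) * Real.exp (-c₂*d^2/u) ≤
            3^(ν/2) * ((max Kh (2^(ν/2))) * (4^α * (u^α * ρ^(-(2*α))))) := by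
          have hWs : (1+ρ^2/u)^(ν/2) ≤ 3^(ν/2) * (1+d^2/u)^(ν/2) := by
            have h2 : ρ^2/u ≤ (2*T+2*d^2)/u := by gcongr
            have h3 : (2*T+2*d^2)/u = 2*(T/u) + 2*(d^2/u) := by ring
            rw [h3] at h2
            have h4 : T/u ≤ 1 := (div_le_one hu).2 huT.le
            have h5 : (0:ℝ) ≤ d^2/u := by positivity
            have h6 : 1+ρ^2/u ≤ 3*(1+d^2/u) := by linarith
            calc (1+ρ^2/u)^(ν/2) ≤ (3*(1+d^2/u))^(ν/2) :=
                Real.rpow_le_rpow (by positivity) h6 (by positivity)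
            _ = 3^(ν/2) * (1+d^2/u)^(ν/2) := Real.mul_rpow (by norm_num) (by positivity)
          have hGm : (1+d^2/u)^(ν/2) * Real.exp (-c₂*d^2/u) ≤
              (max Kh (2^(ν/2))) * (u/max (d^2) T)^α := by
            rcases le_or_gt (d^2) T with hcase | hcase
            · have hmeq : max (d^2) T = T := max_eq_right hcase
              have hs1 : d^2/u ≤ 1 := by
                rw [div_le_one hu]
                linarith [huT.le, hcase]
              have h7 : (1+d^2/u)^(ν/2) ≤ 2^(ν/2) :=
                Real.rpow_le_rpow (by positivity) (by linarith) (by positivity)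
              have h8 : Real.exp (-c₂*d^2/u) ≤ 1 := by
                rw [Real.exp_le_one_iff]
                have h9 : (0:ℝ) ≤ c₂*d^2/u := by positivity
                have e : -c₂*d^2/u = -(c₂*d^2/u) := by ring
                rw [e]; linarith
              have h9 : (1:ℝ) ≤ (u/max (d^2) T)^α := by
                rw [hmeq]
                exact Real.one_le_rpow ((one_le_div hT).2 huT.le) hα0.le
              calc (1+d^2/u)^(ν/2) * Real.exp (-c₂*d^2/u) ≤ 2^(ν/2) * 1 :=
                  mul_le_mul h7 h8 (Real.exp_pos _).le (by positivity)
              _ = 2^(ν/2) := mul_one _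
              _ = 2^(ν/2) * 1 := (mul_one _).symm
              _ ≤ (max Kh (2^(ν/2))) * (u/max (d^2) T)^α :=
                  mul_le_mul (le_max_right _ _) h9 one_pos.le hKhmax0
            · have hmeq : max (d^2) T = d^2 := max_eq_left hcase.le
              have hd2 : 0 < d^2 := lt_trans hT hcase
              have hKh' := hKh (d^2/u) (by positivity)
              have hexpeq : Real.exp (-(c₂*(d^2/u))) = Real.exp (-c₂*d^2/u) := by
                rw [show -(c₂*(d^2/u)) = -c₂*d^2/u by ring]
              have hsplit2 : ((1:ℝ)+d^2/u)^(ν/2+α) = (1+d^2/u)^(ν/2) * (1+d^2/u)^α :=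
                Real.rpow_add (by positivity) _ _
              have hsa : (d^2/u)^α ≤ (1+d^2/u)^α := by
                apply Real.rpow_le_rpow (by positivity) ?_ hα0.le
                linarith
              have hfin : (1+d^2/u)^(ν/2) * Real.exp (-c₂*d^2/u) * (d^2/u)^α ≤ Kh := by
                calc (1+d^2/u)^(ν/2) * Real.exp (-c₂*d^2/u) * (d^2/u)^α
                    ≤ (1+d^2/u)^(ν/2) * Real.exp (-c₂*d^2/u) * (1+d^2/u)^α := by
                      apply mul_le_mul_of_nonneg_left hsa (by positivity)
                _ = (1+d^2/u)^(ν/2+α) * Real.exp (-(c₂*(d^2/u))) := by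
                      rw [hsplit2, hexpeq]; ring
                _ ≤ Kh := hKh'
              have hinv : (u/max (d^2) T)^α = ((d^2/u)^α)⁻¹ := by
                rw [hmeq, show u/d^2 = (d^2/u)⁻¹ from (inv_div _ _).symm,
                  Real.inv_rpow (by positivity)]
              rw [hinv]
              have hsα : 0 < (d^2/u)^α := Real.rpow_pos_of_pos (by positivity) α
              calc (1+d^2/u)^(ν/2) * Real.exp (-c₂*d^2/u)
                  ≤ Kh * ((d^2/u)^α)⁻¹ := by
                    rw [← div_eq_mul_inv, le_div_iff₀ hsα]
                    exact hfin
              _ ≤ (max Kh (2^(ν/2))) * ((d^2/u)^α)⁻¹ :=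
                  mul_le_mul_of_nonneg_right (le_max_left _ _) (by positivity)
          calc (1+ρ^2/u)^(ν/2) * Real.exp (-c₂*d^2/u)
              ≤ (3^(ν/2) * (1+d^2/u)^(ν/2)) * Real.exp (-c₂*d^2/u) :=
                mul_le_mul_of_nonneg_right hWs (Real.exp_pos _).le
          _ = 3^(ν/2) * ((1+d^2/u)^(ν/2) * Real.exp (-c₂*d^2/u)) := by ring
          _ ≤ 3^(ν/2) * ((max Kh (2^(ν/2))) * (u/max (d^2) T)^α) :=
                mul_le_mul_of_nonneg_left hGm (by positivity)
          _ ≤ 3^(ν/2) * ((max Kh (2^(ν/2))) * (4^α * (u^α * ρ^(-(2*α))))) := by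
                apply mul_le_mul_of_nonneg_left
                  (mul_le_mul_of_nonneg_left humb hKhmax0) (by positivity)
        calc h u x y * η t u
            ≤ (C₂*C₀*(1+ρ^2/u)^(ν/2)/Vρ * Real.exp (-c₂*d^2/u)) * (Cs * (t * u^(-1-α/2))) :=
              mul_le_mul hhb hη2 (hηpos t ht u hu).le (by positivity)
        _ = (C₂*C₀*Cs) * (t/Vρ) * u^(-1-α/2) * ((1+ρ^2/u)^(ν/2) * Real.exp (-c₂*d^2/u)) := by
              ring
        _ ≤ (C₂*C₀*Cs) * (t/Vρ) * u^(-1-α/2) *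
            (3^(ν/2) * ((max Kh (2^(ν/2))) * (4^α * (u^α * ρ^(-(2*α)))))) := by
              apply mul_le_mul_of_nonneg_left hgain (by positivity)
        _ = KB * (t/Vρ) * (ρ^(-(2*α)) * (u^(-1-α/2) * u^α)) := by rw [hKBdef]; ring
        _ = KB * (t/Vρ) * (ρ^(-(2*α)) * u^(α/2-1)) := by rw [hmerge]
        _ ≤ Kp * (t/Vρ) * (ρ^(-(2*α)) * u^(α/2-1)) := by
              apply mul_le_mul_of_nonneg_right
                (mul_le_mul_of_nonneg_right hKBKp (by positivity)) (by positivity)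
        _ = Kp * t / Vρ * (ρ^(-(2*α)) * u^(α/2-1)) := by ring
    · -- case u > ρ²
      rw [if_neg (not_le.2 hup)]
      have hρsu : ρ ≤ Real.sqrt u := by
        rw [show ρ = Real.sqrt (ρ^2) from (Real.sqrt_sq hρ.le).symm]
        exact Real.sqrt_le_sqrt hup.le
      have hVmρ : Vρ ≤ (μ (ball y (Real.sqrt u))).toReal := hVmono y ρ _ hρ hρsu
      have hexp1 : Real.exp (-c₂ * d^2/u) ≤ 1 := by
        rw [Real.exp_le_one_iff]
        have h9 : (0:ℝ) ≤ c₂*d^2/u := by positivity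
        have e : -c₂*d^2/u = -(c₂*d^2/u) := by ring
        rw [e]; linarith
      have hη2 := ((hηbd t ht u hu).2 (lt_of_le_of_lt hTρ hup)).2
      rw [div_le_iff₀ (by positivity)] at hη2
      have hhb : h u x y ≤ C₂ / Vρ := by
        calc h u x y ≤ C₂/(μ (ball y (Real.sqrt u))).toReal * Real.exp (-c₂*d^2/u) := hhub
        _ ≤ C₂/Vρ * 1 :=
            mul_le_mul (div_le_div_of_nonneg_left hC₂.le hVρ0 hVmρ) hexp1
              (Real.exp_pos _).le (by positivity)
        _ = C₂/Vρ := mul_one _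
      calc h u x y * η t u ≤ (C₂/Vρ) * η t u :=
          mul_le_mul_of_nonneg_right hhb (hηpos t ht u hu).le
      _ ≤ (C₂/Vρ) * (Cs * (t * u^(-1-α/2))) :=
          mul_le_mul_of_nonneg_left hη2 (by positivity)
      _ = (C₂*Cs) * (t/Vρ) * u^(-1-α/2) := by ring
      _ ≤ Kp * (t/Vρ) * u^(-1-α/2) := by
          apply mul_le_mul_of_nonneg_right
            (mul_le_mul_of_nonneg_right (le_max_right (max KA KB) (C₂*Cs)) (by positivity))
            (by positivity)
      _ = Kp * t / Vρ * u^(-1-α/2) := by ring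
  -- integrability and integral of F
  have hF0int : IntegrableOn (fun u : ℝ => u^(α/2-1)) (Set.Ioc 0 (ρ^2)) :=
    (intervalIntegrable_iff_integrableOn_Ioc_of_le hρ2.le).1
      (intervalIntegral.intervalIntegrable_rpow' (by linarith))
  have hF1int : IntegrableOn (fun u : ℝ => ρ^(-(2*α)) * u^(α/2-1)) (Set.Ioc 0 (ρ^2)) :=
    hF0int.const_mul _
  have hF2int : IntegrableOn (fun u : ℝ => u^(-1-α/2)) (Set.Ioi (ρ^2)) :=
    integrableOn_Ioi_rpow_of_lt (by linarith) hρ2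
  have hFint1 : IntegrableOn F (Set.Ioc 0 (ρ^2)) :=
    hF1int.congr_fun (fun u hu => (if_pos hu.2).symm) measurableSet_Ioc
  have hFint2 : IntegrableOn F (Set.Ioi (ρ^2)) :=
    hF2int.congr_fun (fun u hu => (if_neg (not_le.2 hu)).symm) measurableSet_Ioi
  have hFint : IntegrableOn F (Set.Ioi 0) := by
    rw [← Set.Ioc_union_Ioi_eq_Ioi hρ2.le]
    exact hFint1.union hFint2
  have hαne : α ≠ 0 := hα0.ne'
  have hVρne : Vρ ≠ 0 := hVρ0.ne'
  have hραpos : 0 < ρ^α := Real.rpow_pos_of_pos hρ α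
  have hFval : ∫ u in Set.Ioi (0:ℝ), F u ≤ (4/α) * ρ^(-α) := by
    have hsplit : ∫ u in Set.Ioi (0:ℝ), F u =
        (∫ u in Set.Ioc 0 (ρ^2), F u) + ∫ u in Set.Ioi (ρ^2), F u := by
      rw [← setIntegral_union (Set.Ioc_disjoint_Ioi le_rfl) measurableSet_Ioi hFint1 hFint2,
        Set.Ioc_union_Ioi_eq_Ioi hρ2.le]
    have hint1 : ∫ u in Set.Ioc 0 (ρ^2), F u = (2/α) * ρ^(-α) := by
      have e1 : ∫ u in Set.Ioc 0 (ρ^2), F u = ∫ u in Set.Ioc 0 (ρ^2), ρ^(-(2*α)) * u^(α/2-1) :=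
        setIntegral_congr_fun measurableSet_Ioc (fun u hu => if_pos hu.2)
      have e2 : ∫ u in Set.Ioc 0 (ρ^2), (u:ℝ)^(α/2-1) =
          ((ρ^2)^(α/2-1+1) - (0:ℝ)^(α/2-1+1))/(α/2-1+1) := by
        rw [← intervalIntegral.integral_of_le hρ2.le]
        open intervalIntegral in exact integral_rpow (Or.inl (by linarith))
      have e3 : α/2-1+1 = α/2 := by ring
      rw [e3] at e2
      rw [Real.zero_rpow (by positivity : (0:ℝ) < α/2).ne', sub_zero] at e2
      have e4 : ((ρ^2:ℝ))^(α/2) = ρ^α := by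
        rw [← Real.rpow_two, ← Real.rpow_mul hρ.le]
        congr 1; ring
      have e5 : ρ^(-(2*α)) * ρ^α = ρ^(-α) := by
        rw [← Real.rpow_add hρ]; congr 1; ring
      rw [e1, integral_const_mul, e2, e4, ← e5]
      field_simp
    have hint2 : ∫ u in Set.Ioi (ρ^2), F u = (2/α) * ρ^(-α) := by
      have e1 : ∫ u in Set.Ioi (ρ^2), F u = ∫ u in Set.Ioi (ρ^2), (u:ℝ)^(-1-α/2) :=
        setIntegral_congr_fun measurableSet_Ioi (fun u hu => if_neg (not_le.2 hu))
      have e2 : ∫ u in Set.Ioi (ρ^2), (u:ℝ)^(-1-α/2) = -(ρ^2:ℝ)^(-1-α/2+1)/(-1-α/2+1) :=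
        integral_Ioi_rpow_of_lt (by linarith) hρ2
      have e3 : -1-α/2+1 = -(α/2) := by ring
      rw [e3] at e2
      have e4 : ((ρ^2:ℝ))^(-(α/2)) = ρ^(-α) := by
        rw [← Real.rpow_two, ← Real.rpow_mul hρ.le]
        congr 1; ring
      rw [e1, e2, e4]
      field_simp
    have heq : (2:ℝ)/α * ρ^(-α) + 2/α * ρ^(-α) = 4/α * ρ^(-α) := by ring
    rw [hsplit, hint1, hint2, heq]
  -- upper bound for the integral
  have hPker_ub : Pker h η t x y ≤ (Kp * t / Vρ) * ((4/α) * ρ^(-α)) := by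
    have hmono : ∫ u in Set.Ioi (0:ℝ), h u x y * η t u ≤
        ∫ u in Set.Ioi (0:ℝ), (Kp * t / Vρ) * F u := by
      apply integral_mono_of_nonneg
      · exact (ae_restrict_iff' measurableSet_Ioi).2 (ae_of_all _ (fun u hu => hg0 u hu))
      · exact hFint.const_mul _
      · exact (ae_restrict_iff' measurableSet_Ioi).2 (ae_of_all _ hFub)
    calc Pker h η t x y ≤ ∫ u in Set.Ioi (0:ℝ), (Kp * t / Vρ) * F u := hmono
    _ = (Kp * t / Vρ) * ∫ u in Set.Ioi (0:ℝ), F u := integral_const_mul _ _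
    _ ≤ _ := mul_le_mul_of_nonneg_left hFval (by positivity)
  -- measurability of the integrand
  have hmeas_g : AEStronglyMeasurable (fun u : ℝ => h u x y * η t u)
      (volume.restrict (Set.Ioi (0:ℝ))) := by
    apply Measurable.aestronglyMeasurable
    have m1 : Measurable (fun u : ℝ => h u x y) := by
      have e : (fun u : ℝ => h u x y) =
          (fun p : ℝ × M × M => h p.1 p.2.1 p.2.2) ∘ (fun u : ℝ => (u, x, y)) := rfl
      rw [e]; exact hhmeas.comp (measurable_id.prodMk measurable_const)
    have m2 : Measurable (fun u : ℝ => η t u) := by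
      have e : (fun u : ℝ => η t u) =
          (fun p : ℝ × ℝ => η p.1 p.2) ∘ (fun u : ℝ => (t, u)) := rfl
      rw [e]; exact hηmeas.comp (measurable_const.prodMk measurable_id)
    exact m1.mul m2
  have hgint : IntegrableOn (fun u : ℝ => h u x y * η t u) (Set.Ioi 0) := by
    apply Integrable.mono' (hFint.const_mul (Kp * t / Vρ)) hmeas_g
    refine (ae_restrict_iff' measurableSet_Ioi).2 (ae_of_all _ (fun u hu => ?_))
    rw [Real.norm_eq_abs, abs_of_nonneg (hg0 u hu)]
    exact hFub u hu
  -- lower bound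
  have hρnα : ρ^(-α) = (ρ^α)⁻¹ := Real.rpow_neg hρ.le α
  have hPker_lb : (c₁ * Real.exp (-C₁) * cs * 2^(-1-α/2)) / (C₀*2^ν) * (t * ρ^(-α)) / Vρ ≤
      Pker h η t x y := by
    have hI : Set.Ioc (ρ^2) (2*ρ^2) ⊆ Set.Ioi (0:ℝ) := fun u hu => lt_trans hρ2 hu.1
    have hgint' : IntegrableOn (fun u => h u x y * η t u) (Set.Ioc (ρ^2) (2*ρ^2)) :=
      hgint.mono_set hI
    have hlow : ∀ u ∈ Set.Ioc (ρ^2) (2*ρ^2),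
        (c₁ * Real.exp (-C₁)) / (C₀*2^ν*Vρ) * (cs * (t * (2*ρ^2)^(-1-α/2))) ≤
          h u x y * η t u := by
      intro u hu
      have hu0 : 0 < u := lt_trans hρ2 hu.1
      have hηl : cs * (t * u^(-1-α/2)) ≤ η t u := by
        have h1 := ((hηbd t ht u hu0).2 (lt_of_le_of_lt hTρ hu.1)).1
        rw [le_div_iff₀ (by positivity)] at h1
        linarith [h1]
      have hηl2 : cs * (t * (2*ρ^2)^(-1-α/2)) ≤ η t u := by
        refine le_trans ?_ hηl
        have h2 : ((2*ρ^2:ℝ))^(-1-α/2) ≤ u^(-1-α/2) :=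
          Real.rpow_le_rpow_of_nonpos hu0 hu.2 (by linarith)
        exact mul_le_mul_of_nonneg_left (mul_le_mul_of_nonneg_left h2 ht.le) hcs.le
      have hVsu : 0 < Real.sqrt u := Real.sqrt_pos.2 hu0
      have hhl : (c₁ * Real.exp (-C₁)) / (C₀*2^ν*Vρ) ≤ h u x y := by
        have h1 := (hLY u hu0 x y).1
        rw [← hddef] at h1
        have hd2u : d^2/u ≤ 1 := by
          rw [div_le_one hu0]
          calc d^2 ≤ ρ^2 := pow_le_pow_left₀ hd0 hdρ 2
          _ ≤ u := hu.1.le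
        have he : Real.exp (-C₁) ≤ Real.exp (-C₁ * d^2/u) := by
          apply Real.exp_le_exp.2
          have h3 : C₁ * (d^2/u) ≤ C₁ * 1 := mul_le_mul_of_nonneg_left hd2u hC₁.le
          have h4 : -C₁ * d^2/u = -(C₁ * (d^2/u)) := by ring
          rw [h4]
          linarith
        have hVu : (μ (ball y (Real.sqrt u))).toReal ≤ C₀*2^ν*Vρ := by
          have hsu2 : Real.sqrt u ≤ 2*ρ := by
            rw [show (2*ρ) = Real.sqrt ((2*ρ)^2) from (Real.sqrt_sq (by positivity)).symm]
            apply Real.sqrt_le_sqrt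
            calc u ≤ 2*ρ^2 := hu.2
            _ ≤ (2*ρ)^2 := by
                rw [mul_pow]
                exact mul_le_mul_of_nonneg_right (by norm_num) (sq_nonneg ρ)
          have h2 := hVmono y (Real.sqrt u) (2*ρ) hVsu hsu2
          have h3 := hVdoub y ρ (2*ρ) hρ (by linarith)
          rw [show (2*ρ)/ρ = 2 from by field_simp] at h3
          exact le_trans h2 h3
        calc (c₁ * Real.exp (-C₁)) / (C₀*2^ν*Vρ)
            = c₁/(C₀*2^ν*Vρ) * Real.exp (-C₁) := by ring
        _ ≤ c₁/(μ (ball y (Real.sqrt u))).toReal * Real.exp (-C₁*d^2/u) := by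
            apply mul_le_mul ?_ he (Real.exp_pos _).le (by positivity)
            exact div_le_div_of_nonneg_left hc₁.le (hVr y _ hVsu) hVu
        _ ≤ h u x y := h1
      exact mul_le_mul hhl hηl2 (by positivity) (hh0 u hu0)
    have hvolne : volume (Set.Ioc (ρ^2) (2*ρ^2)) ≠ ⊤ := by
      rw [Real.volume_Ioc]; exact ENNReal.ofReal_ne_top
    have hge := setIntegral_ge_of_const_le measurableSet_Ioc hvolne hlow hgint'
    have hvol : (volume (Set.Ioc (ρ^2) (2*ρ^2))).toReal = ρ^2 := by
      rw [Real.volume_Ioc, ENNReal.toReal_ofReal (by linarith [hρ2])]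
      ring
    rw [measureReal_def, hvol, smul_eq_mul] at hge
    have hmono2 : ∫ u in Set.Ioc (ρ^2) (2*ρ^2), h u x y * η t u ≤ Pker h η t x y := by
      apply setIntegral_mono_set hgint
        ((ae_restrict_iff' measurableSet_Ioi).2 (ae_of_all _ (fun u hu => hg0 u hu)))
        (HasSubset.Subset.eventuallyLE hI)
    refine le_trans (le_trans (le_of_eq ?_) hge) hmono2
    -- the constant identity
    have e1 : ((2*ρ^2:ℝ))^(-1-α/2) = 2^(-1-α/2:ℝ) * ρ^(2*(-1-α/2)) := by
      rw [Real.mul_rpow (by norm_num) (by positivity), ← Real.rpow_two,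
        ← Real.rpow_mul hρ.le]
    have e2 : ρ^(-α:ℝ) = ρ^(2*(-1-α/2)) * ρ^2 := by
      rw [← Real.rpow_two, ← Real.rpow_add hρ]
      congr 1; ring
    rw [e1, e2]
    have hC2ν : (C₀*2^ν:ℝ) ≠ 0 := by positivity
    field_simp
  -- final forms
  have hPker_ub2 : Pker h η t x y ≤ Cu * (t / (Vx * ρ^α)) := by
    refine le_trans hPker_ub ?_
    have e1 : Kp * t / Vρ * ((4/α) * ρ^(-α)) = (Kp * (4/α)) * (t / (Vρ * ρ^α)) := by
      rw [hρnα]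
      field_simp
    have e2 : Cu * (t / (Vx * ρ^α)) = (Kp*(4/α)) * (((C₀*2^ν) * t) / (Vx * ρ^α)) := by
      rw [hCudef]
      ring
    rw [e1, e2]
    apply mul_le_mul_of_nonneg_left ?_ (by positivity)
    rw [div_le_div_iff₀ (by positivity) (by positivity)]
    calc t * (Vx * ρ^α) = (Vx * ρ^α) * t := by ring
    _ ≤ ((C₀*2^ν*Vρ) * ρ^α) * t := by
        apply mul_le_mul_of_nonneg_right
          (mul_le_mul_of_nonneg_right hcompxy hραpos.le) ht.le
    _ = (C₀*2^ν) * t * (Vρ * ρ^α) := by ring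
  have hPker_lb2 : cl * (t / (Vx * ρ^α)) ≤ Pker h η t x y := by
    refine le_trans ?_ hPker_lb
    have hN : (0:ℝ) < c₁ * Real.exp (-C₁) * cs * 2^(-1-α/2) := by positivity
    have e1 : (c₁ * Real.exp (-C₁) * cs * 2^(-1-α/2)) / (C₀*2^ν) * (t * ρ^(-α)) / Vρ
        = (c₁ * Real.exp (-C₁) * cs * 2^(-1-α/2)) * (t / ((C₀*2^ν) * (Vρ * ρ^α))) := by
      rw [hρnα]
      have : (C₀*2^ν:ℝ) ≠ 0 := by positivity
      field_simp
    have e2 : cl * (t / (Vx * ρ^α))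
        = (c₁ * Real.exp (-C₁) * cs * 2^(-1-α/2)) * (t / ((C₀*2^ν) * ((C₀*2^ν) * (Vx * ρ^α)))) := by
      rw [hcldef]
      have : (C₀*2^ν:ℝ) ≠ 0 := by positivity
      field_simp
    rw [e1, e2]
    apply mul_le_mul_of_nonneg_left ?_ hN.le
    apply div_le_div_of_nonneg_left ht.le (mul_pos (by positivity) (mul_pos hVρ0 hραpos))
    apply mul_le_mul_of_nonneg_left ?_ (by positivity)
    calc Vρ * ρ^α ≤ (C₀*2^ν*Vx) * ρ^α := mul_le_mul_of_nonneg_right hcompyx hραpos.le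
    _ = (C₀*2^ν) * (Vx * ρ^α) := by ring
  -- conclude
  constructor
  · refine le_trans ?_ hPker_lb2
    apply mul_le_mul_of_nonneg_right (min_le_left _ _) (by positivity)
  · refine le_trans hPker_ub2 ?_
    apply mul_le_mul_of_nonneg_right (le_max_right _ _) (by positivity)
end
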